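/- arXiv:0712.1142 — 9 statements merged into one kernel-verified Lean document; each statement's English description precedes it below -/
import Mathlib

section
/- If T(S) is equicontinuous and every element of M̄ is persistently reducible (Per(S) = M̄), then the following are equivalent: Red(S) = M̄; and M̄ = Irr(S) ⊕ I(S), i.e. Irr(S) + I(S) = M̄ and Irr(S) ∩ I(S) = {0}. -/
open Set Filter Topology Pointwise

/-- The set of all finite compositions of elements of `T1`, including the identity. -/
def TS {M : Type*} [AddCommGroup M] (T1 : Set (AddMonoid.End M)) : Set (AddMonoid.End M) :=
  ↑(Submonoid.closure T1)

/-- Smallest topologically closed additive subgroup containing `Z` and stable under `R`. -/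
def Cspan {M : Type*} [AddCommGroup M] [TopologicalSpace M]
    (R : Set (AddMonoid.End M)) (Z : Set M) : Set M :=
  ⋂₀ {N : Set M | Z ⊆ N ∧ IsClosed N ∧ (∃ H : AddSubgroup M, N = ↑H) ∧
      ∀ r ∈ R, ∀ a ∈ N, r a ∈ N}

def IrrS {M : Type*} [AddCommGroup M] (T1 : Set (AddMonoid.End M)) : Set M :=
  {a | ∀ t ∈ TS T1, t a = a}

def IS {M : Type*} [AddCommGroup M] [TopologicalSpace M]
    (T1 : Set (AddMonoid.End M)) : Set M :=
  closure (AddSubgroup.closure {x : M | ∃ a : M, ∃ t ∈ TS T1, x = a - t a} : Set M)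

def Stuck {M : Type*} [AddCommGroup M] (T1 : Set (AddMonoid.End M)) (N : Set M) (a : M) :
    Prop :=
  ∀ t ∈ TS T1, t a ∈ N

def PerE {M : Type*} [AddCommGroup M] (T1 : Set (AddMonoid.End M)) (ε : Set M) : Set M :=
  {a | ∀ t1 ∈ TS T1, ∃ t2 ∈ TS T1, ∃ b ∈ IrrS T1,
    Stuck T1 {x | x - b ∈ ε} (t2 (t1 a))}

def Per {M : Type*} [AddCommGroup M] (T1 : Set (AddMonoid.End M))
    (B : ℕ → AddSubgroup M) : Set M :=
  ⋂ n, PerE T1 (B n)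

def UniqE {M : Type*} [AddCommGroup M] (T1 : Set (AddMonoid.End M)) (ε : Set M) : Set M :=
  {a | ∀ t1 ∈ TS T1, ∀ t2 ∈ TS T1, ∀ b1 ∈ IrrS T1, ∀ b2 ∈ IrrS T1,
    Stuck T1 {x | x - b1 ∈ ε} (t1 a) → Stuck T1 {x | x - b2 ∈ ε} (t2 a) → b1 - b2 ∈ ε}

def RedE {M : Type*} [AddCommGroup M] (T1 : Set (AddMonoid.End M))
    (B : ℕ → AddSubgroup M) (ε : Set M) : Set M :=
  Per T1 B ∩ UniqE T1 ε

def Red {M : Type*} [AddCommGroup M] (T1 : Set (AddMonoid.End M))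
    (B : ℕ → AddSubgroup M) : Set M :=
  ⋂ n, RedE T1 B (B n)

def Equicont {M : Type*} [AddCommGroup M] (T1 : Set (AddMonoid.End M))
    (B : ℕ → AddSubgroup M) : Prop :=
  ∀ n : ℕ, ∃ m : ℕ, ∀ t ∈ TS T1, ∀ a ∈ B m, t a ∈ B n

def DSM {M : Type*} [AddCommGroup M] [TopologicalSpace M]
    (R : Set (AddMonoid.End M)) (Y : Set M) (P : M → M → Prop) (μ : M) : Set M :=
  Cspan R {ν | ν ∈ Y ∧ P ν μ}

def Compatible {M : Type*} [AddCommGroup M] [TopologicalSpace M]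
    (R : Set (AddMonoid.End M)) (Y : Set M) (P : M → M → Prop)
    (t : AddMonoid.End M) : Prop :=
  ∀ μ ∈ Y, t μ = μ ∨ t μ ∈ DSM R Y P μ

def DIS {M : Type*} [AddCommGroup M] [TopologicalSpace M]
    (R : Set (AddMonoid.End M)) (Y : Set M) (P : M → M → Prop)
    (T1 : Set (AddMonoid.End M)) (μ : M) : Set M :=
  Cspan R {x | ∃ ν ∈ Y, P ν μ ∧ ∃ t ∈ T1, x = ν - t ν}

def TDCC {M : Type*} [AddCommGroup M] [TopologicalSpace M]
    (Y : Set M) (P : M → M → Prop) : Prop :=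
  ∀ μ : ℕ → M, (∀ n, μ n ∈ Y) → (∀ n, P (μ (n + 1)) (μ n)) →
    Filter.Tendsto μ Filter.atTop (nhds 0)


section Aux

open scoped Uniformity

set_option linter.unusedSectionVars false

variable {M : Type*} [AddCommGroup M] [UniformSpace M] [IsUniformAddGroup M]
    [CompleteSpace M] [T2Space M]

/-- `t a` lies in the coset `b + B n` for every `t ∈ T(S)`. -/
def StuckIn (B : ℕ → AddSubgroup M) (T1 : Set (AddMonoid.End M)) (a b : M) (n : ℕ) : Prop :=
  ∀ t ∈ TS T1, t a - b ∈ B n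

variable {B : ℕ → AddSubgroup M} {T1 : Set (AddMonoid.End M)}

theorem one_mem_TS : (1 : AddMonoid.End M) ∈ TS T1 := Submonoid.one_mem _

theorem mul_mem_TS {s t : AddMonoid.End M} (hs : s ∈ TS T1) (ht : t ∈ TS T1) :
    s * t ∈ TS T1 := Submonoid.mul_mem _ hs ht

theorem cont_TS (hT1cont : ∀ t ∈ T1, Continuous t) {t : AddMonoid.End M} (ht : t ∈ TS T1) :
    Continuous t := by
  induction ht using Submonoid.closure_induction with
  | mem x hx => exact hT1cont x hx
  | one => exact continuous_id
  | mul x y hx hy hcx hcy => exact hcx.comp hcy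

theorem B_anti (hBanti : ∀ n, (B (n + 1) : Set M) ⊆ (B n : Set M)) {n m : ℕ} (h : n ≤ m) :
    (B m : Set M) ⊆ (B n : Set M) := by
  induction h with
  | refl => exact fun x hx => hx
  | step h ih => exact fun x hx => ih (hBanti _ hx)

theorem B_sep (hBsep : ⋂ n, (B n : Set M) = {0}) {x : M} (h : ∀ n, x ∈ B n) : x = 0 := by
  have : x ∈ ⋂ n, (B n : Set M) := Set.mem_iInter.2 h
  rwa [hBsep, Set.mem_singleton_iff] at this

theorem mem_closure_approx (hBbasis : (nhds (0 : M)).HasBasis (fun _ : ℕ => True)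
    (fun n => (B n : Set M))) {S : Set M} {x : M}
    (h : ∀ n, ∃ y ∈ S, x - y ∈ B n) : x ∈ closure S := by
  rw [mem_closure_iff_nhds]
  intro U hU
  rw [← map_add_left_nhds_zero x, Filter.mem_map, hBbasis.mem_iff] at hU
  obtain ⟨n, -, hn⟩ := hU
  obtain ⟨y, hyS, hy⟩ := h n
  have h1 : y - x ∈ (B n : Set M) := by simpa using neg_mem hy
  have h2 : x + (y - x) ∈ U := hn h1
  exact ⟨y, by simpa using h2, hyS⟩

theorem approx_of_mem_closure (hBbasis : (nhds (0 : M)).HasBasis (fun _ : ℕ => True)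
    (fun n => (B n : Set M))) {S : Set M} {x : M}
    (h : x ∈ closure S) (n : ℕ) : ∃ y ∈ S, x - y ∈ B n := by
  rw [mem_closure_iff_nhds] at h
  have hx : (fun z => x + z) '' (B n : Set M) ∈ 𝓝 x := by
    rw [← map_add_left_nhds_zero x, Filter.mem_map]
    filter_upwards [hBbasis.mem_of_mem (i := n) trivial] with z hz using ⟨z, hz, rfl⟩
  obtain ⟨y, ⟨z, hz, hzy⟩, hyS⟩ := h _ hx
  exact ⟨y, hyS, by rw [← hzy]; simpa using neg_mem hz⟩

theorem B_closed (hBopen : ∀ n, IsOpen (B n : Set M)) (n : ℕ) : IsClosed (B n : Set M) :=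
  (B n).isClosed_of_isOpen (hBopen n)

theorem lim_mem_B (hBopen : ∀ n, IsOpen (B n : Set M)) {u : ℕ → M} {l x : M} {m : ℕ}
    (hl : Filter.Tendsto u Filter.atTop (𝓝 l)) (h : ∀ᶠ j in Filter.atTop, u j - x ∈ B m) :
    l - x ∈ B m :=
  (B_closed hBopen m).mem_of_tendsto (hl.sub_const x) h

theorem exists_lim (hBbasis : (nhds (0 : M)).HasBasis (fun _ : ℕ => True)
    (fun n => (B n : Set M))) {u : ℕ → M}
    (h : ∀ k j, k ≤ j → u j - u k ∈ B k) : ∃ l, Filter.Tendsto u Filter.atTop (𝓝 l) := by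
  have hb : (𝓤 M).HasBasis (fun _ : ℕ => True)
      (fun n => {p : M × M | p.2 - p.1 ∈ (B n : Set M)}) := by
    rw [uniformity_eq_comap_nhds_zero M]
    exact hBbasis.comap _
  have hc : CauchySeq u := by
    rw [hb.cauchySeq_iff]
    intro k _
    refine ⟨k, fun m hm j hj => ?_⟩
    have := sub_mem (h k j hj) (h k m hm)
    simpa using this
  exact cauchySeq_tendsto_of_complete hc

theorem zero_mem_IrrS : (0 : M) ∈ IrrS T1 := fun t _ => map_zero t

theorem sub_mem_IrrS {x y : M} (hx : x ∈ IrrS T1) (hy : y ∈ IrrS T1) : x - y ∈ IrrS T1 :=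
  fun t ht => by rw [map_sub, hx t ht, hy t ht]

theorem add_mem_IrrS {x y : M} (hx : x ∈ IrrS T1) (hy : y ∈ IrrS T1) : x + y ∈ IrrS T1 :=
  fun t ht => by rw [map_add, hx t ht, hy t ht]

theorem isClosed_IrrS (hT1cont : ∀ t ∈ T1, Continuous t) : IsClosed (IrrS T1 : Set M) := by
  have : (IrrS T1 : Set M) = ⋂ t ∈ TS T1, {a : M | t a = a} := by
    ext a; simp [IrrS]
  rw [this]
  exact isClosed_biInter fun t ht => isClosed_eq (cont_TS hT1cont ht) continuous_id

/-- The subgroup generated by the elements `a - t a`. -/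
def ISgrp (T1 : Set (AddMonoid.End M)) : AddSubgroup M :=
  AddSubgroup.closure {x : M | ∃ a : M, ∃ t ∈ TS T1, x = a - t a}

theorem IS_eq : IS T1 = closure (ISgrp T1 : Set M) := rfl

theorem gen_mem_IS {a : M} {t : AddMonoid.End M} (ht : t ∈ TS T1) : a - t a ∈ IS T1 :=
  subset_closure (AddSubgroup.subset_closure ⟨a, t, ht, rfl⟩)

theorem zero_mem_IS : (0 : M) ∈ IS T1 := subset_closure (AddSubgroup.zero_mem _)

theorem sub_mem_IS {x y : M} (hx : x ∈ IS T1) (hy : y ∈ IS T1) : x - y ∈ IS T1 := by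
  have h := ((ISgrp (M := M) T1).topologicalClosure).sub_mem
    (x := x) (y := y) hx hy
  exact h

theorem isClosed_IS : IsClosed (IS T1 : Set M) := isClosed_closure

theorem TS_maps_ISgrp {t : AddMonoid.End M} (ht : t ∈ TS T1) {x : M} (hx : x ∈ ISgrp T1) :
    t x ∈ ISgrp (M := M) T1 := by
  induction hx using AddSubgroup.closure_induction with
  | mem x hx =>
      obtain ⟨a, s, hs, rfl⟩ := hx
      have h1 : a - (t * s) a ∈ ISgrp (M := M) T1 :=
        AddSubgroup.subset_closure ⟨a, t * s, mul_mem_TS ht hs, rfl⟩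
      have h2 : a - t a ∈ ISgrp (M := M) T1 :=
        AddSubgroup.subset_closure ⟨a, t, ht, rfl⟩
      have : t (a - s a) = (a - (t * s) a) - (a - t a) := by
        show t (a - s a) = (a - t (s a)) - (a - t a)
        rw [map_sub]; abel
      rw [this]
      exact sub_mem h1 h2
  | zero => simpa using (ISgrp (M := M) T1).zero_mem
  | add x y hx hy ihx ihy => simpa [map_add] using add_mem ihx ihy
  | neg x hx ihx => simpa [map_neg] using neg_mem ihx

theorem TS_maps_IS (hT1cont : ∀ t ∈ T1, Continuous t) {t : AddMonoid.End M} (ht : t ∈ TS T1)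
    {x : M} (hx : x ∈ IS T1) : t x ∈ IS T1 := by
  have h1 : t x ∈ closure (t '' (ISgrp T1 : Set M)) :=
    image_closure_subset_closure_image (cont_TS hT1cont ht) ⟨x, hx, rfl⟩
  refine closure_mono ?_ h1
  rintro y ⟨z, hz, rfl⟩
  exact TS_maps_ISgrp ht hz

theorem stuckIn_mono (hBanti : ∀ n, (B (n + 1) : Set M) ⊆ (B n : Set M)) {a b : M} {n m : ℕ}
    (h : n ≤ m) (hs : StuckIn B T1 a b m) : StuckIn B T1 a b n :=
  fun t ht => B_anti hBanti h (hs t ht)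

theorem stuckIn_comp {a b : M} {n : ℕ} {s : AddMonoid.End M} (hs : s ∈ TS T1)
    (h : StuckIn B T1 a b n) : StuckIn B T1 (s a) b n :=
  fun t ht => h (t * s) (mul_mem_TS ht hs)

theorem per_spec (hper : Per T1 B = Set.univ) (a : M) (n : ℕ) {t1 : AddMonoid.End M}
    (ht1 : t1 ∈ TS T1) :
    ∃ t2 ∈ TS T1, ∃ b ∈ IrrS T1, StuckIn B T1 (t2 (t1 a)) b n := by
  have ha : a ∈ PerE T1 (B n) := by
    have h0 : a ∈ Per T1 B := by rw [hper]; trivial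
    exact Set.mem_iInter.mp h0 n
  exact ha t1 ht1

theorem uniq_spec (hred : Red T1 B = Set.univ) (a : M) (n : ℕ) {t1 t2 : AddMonoid.End M}
    {b1 b2 : M} (ht1 : t1 ∈ TS T1) (ht2 : t2 ∈ TS T1) (hb1 : b1 ∈ IrrS T1)
    (hb2 : b2 ∈ IrrS T1) (hs1 : StuckIn B T1 (t1 a) b1 n) (hs2 : StuckIn B T1 (t2 a) b2 n) :
    b1 - b2 ∈ B n := by
  have ha : a ∈ UniqE T1 (B n) := by
    have h0 : a ∈ Red T1 B := by rw [hred]; trivial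
    exact (Set.mem_iInter.mp h0 n).2
  exact ha t1 ht1 t2 ht2 b1 hb1 b2 hb2 hs1 hs2

end Aux
theorem forward_dir
    {M : Type*} [AddCommGroup M] [UniformSpace M] [IsUniformAddGroup M]
    [CompleteSpace M] [T2Space M]
    {B : ℕ → AddSubgroup M} {T1 : Set (AddMonoid.End M)}
    (hBopen : ∀ n, IsOpen (B n : Set M))
    (hBanti : ∀ n, (B (n + 1) : Set M) ⊆ (B n : Set M))
    (hBbasis : (nhds (0 : M)).HasBasis (fun _ : ℕ => True) (fun n => (B n : Set M)))
    (hBsep : ⋂ n, (B n : Set M) = {0})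
    (hT1cont : ∀ t ∈ T1, Continuous t)
    (hequi : Equicont T1 B)
    (hper : Per T1 B = Set.univ)
    (hred : Red T1 B = Set.univ) :
    IrrS T1 + IS T1 = Set.univ ∧ IrrS T1 ∩ IS T1 = {0} := by
  classical
  have hex : ∀ (a : M) (n : ℕ), ∃ b : M, ∃ t : AddMonoid.End M,
      b ∈ IrrS T1 ∧ t ∈ TS T1 ∧ StuckIn B T1 (t a) b n := by
    intro a n
    obtain ⟨t2, ht2, b, hb, hst⟩ := per_spec hper a n (one_mem_TS)
    exact ⟨b, t2, hb, ht2, hst⟩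
  choose bf tf hbf htf hstf using hex
  have hπ : ∀ a : M, ∃ l : M, l ∈ IrrS T1 ∧
      ∀ (n : ℕ) (b : M) (t : AddMonoid.End M), b ∈ IrrS T1 → t ∈ TS T1 →
        StuckIn B T1 (t a) b n → l - b ∈ B n := by
    intro a
    have hctrl : ∀ k j, k ≤ j → bf a j - bf a k ∈ B k := by
      intro k j hkj
      exact uniq_spec hred a k (htf a j) (htf a k) (hbf a j) (hbf a k)
        (stuckIn_mono hBanti hkj (hstf a j)) (hstf a k)
    obtain ⟨l, hl⟩ := exists_lim hBbasis hctrl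
    refine ⟨l, (isClosed_IrrS hT1cont).mem_of_tendsto hl
      (Filter.Eventually.of_forall (hbf a)), ?_⟩
    intro n b t hb ht hst
    have h1 : l - bf a n ∈ B n := lim_mem_B hBopen hl
      (Filter.eventually_atTop.2 ⟨n, fun j hj => hctrl n j hj⟩)
    have h2 : bf a n - b ∈ B n := uniq_spec hred a n (htf a n) ht (hbf a n) hb (hstf a n) hst
    have h3 := add_mem h1 h2
    simpa using h3
  choose π hπIrr hπkey using hπ
  have hπfix : ∀ b ∈ IrrS T1, π b = b := by
    intro b hb
    have key : ∀ n, π b - b ∈ B n := fun n =>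
      hπkey b n b 1 hb one_mem_TS (fun t ht => by
        show t b - b ∈ B n
        rw [hb t ht, sub_self]; exact zero_mem _)
    exact sub_eq_zero.mp (B_sep hBsep key)
  have hπzero : π (0 : M) = 0 := hπfix 0 zero_mem_IrrS
  have hπsmall : ∀ n : ℕ, ∃ m : ℕ, ∀ a ∈ B m, π a ∈ B n := by
    intro n
    obtain ⟨m, hm⟩ := hequi n
    refine ⟨m, fun a ha => ?_⟩
    have h := hπkey a n 0 1 zero_mem_IrrS one_mem_TS (fun t ht => by
      show t a - 0 ∈ B n
      simpa using hm t ht a ha)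
    simpa using h
  have hπadd : ∀ x y : M, π (x + y) = π x + π y := by
    intro x y
    have key : ∀ n, π (x + y) - π x - π y ∈ B n := by
      intro n
      obtain ⟨t, ht, b, hb, hstx⟩ := per_spec hper x n one_mem_TS
      obtain ⟨t2, ht2, b', hb', hsty⟩ := per_spec hper y n ht
      have hstx2 : StuckIn B T1 ((t2 * t) x) b n := stuckIn_comp (a := t x) ht2 hstx
      have hsty2 : StuckIn B T1 ((t2 * t) y) b' n := hsty
      have hsum : StuckIn B T1 ((t2 * t) (x + y)) (b + b') n := by
        intro s hs
        have h1 := hstx2 s hs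
        have h2 := hsty2 s hs
        have heq : s ((t2 * t) (x + y)) - (b + b') =
            (s ((t2 * t) x) - b) + (s ((t2 * t) y) - b') := by
          rw [map_add, map_add]; abel
        rw [heq]; exact add_mem h1 h2
      have k1 := hπkey (x + y) n (b + b') (t2 * t) (add_mem_IrrS hb hb')
        (mul_mem_TS ht2 ht) hsum
      have k2 := hπkey x n b (t2 * t) hb (mul_mem_TS ht2 ht) hstx2
      have k3 := hπkey y n b' (t2 * t) hb' (mul_mem_TS ht2 ht) hsty2
      have heq : π (x + y) - π x - π y =
          (π (x + y) - (b + b')) - (π x - b) - (π y - b') := by abel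
      rw [heq]; exact sub_mem (sub_mem k1 k2) k3
    have h0 := B_sep hBsep key
    have h1 : π (x + y) - (π x + π y) = 0 := by rw [← h0]; abel
    exact sub_eq_zero.mp h1
  have hπneg : ∀ x : M, π (-x) = -π x := by
    intro x
    have h := hπadd x (-x)
    rw [add_neg_cancel, hπzero] at h
    exact eq_neg_of_add_eq_zero_right h.symm
  have hπsub : ∀ x y : M, π (x - y) = π x - π y := by
    intro x y
    rw [sub_eq_add_neg, hπadd, hπneg, ← sub_eq_add_neg]
  have hπt : ∀ t ∈ TS T1, ∀ a : M, π (t a) = π a := by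
    intro t ht a
    have key : ∀ n, π (t a) - π a ∈ B n := by
      intro n
      obtain ⟨t2, ht2, b, hb, hst⟩ := per_spec hper a n ht
      have k1 := hπkey (t a) n b t2 hb ht2 hst
      have k2 := hπkey a n b (t2 * t) hb (mul_mem_TS ht2 ht) hst
      have heq : π (t a) - π a = (π (t a) - b) - (π a - b) := by abel
      rw [heq]; exact sub_mem k1 k2
    exact sub_eq_zero.mp (B_sep hBsep key)
  have hgrp : ∀ x ∈ ISgrp (M := M) T1, π x = 0 := by
    intro x hx
    induction hx using AddSubgroup.closure_induction with
    | mem x hx =>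
        obtain ⟨a, t, ht, rfl⟩ := hx
        rw [hπsub, hπt t ht a, sub_self]
    | zero => exact hπzero
    | add x y hx hy ihx ihy => rw [hπadd, ihx, ihy, add_zero]
    | neg x hx ihx => rw [hπneg, ihx, neg_zero]
  have hπIS : ∀ x ∈ IS T1, π x = 0 := by
    intro x hx
    have key : ∀ n, π x ∈ B n := by
      intro n
      obtain ⟨m, hm⟩ := hπsmall n
      obtain ⟨y, hy, hxy⟩ := approx_of_mem_closure hBbasis
        (hx : x ∈ closure (ISgrp T1 : Set M)) m
      have heq : π x = π y + π (x - y) := by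
        rw [← hπadd, add_sub_cancel]
      rw [heq, hgrp y hy, zero_add]
      exact hm _ hxy
    exact B_sep hBsep key
  constructor
  · apply Set.eq_univ_of_forall
    intro a
    have hmem : a - π a ∈ IS T1 := by
      rw [IS_eq]
      apply mem_closure_approx hBbasis
      intro n
      refine ⟨a - tf a n a, AddSubgroup.subset_closure ⟨a, tf a n, htf a n, rfl⟩, ?_⟩
      have h1 : tf a n a - bf a n ∈ B n := hstf a n 1 one_mem_TS
      have h2 : bf a n - π a ∈ B n := by
        have := neg_mem (hπkey a n (bf a n) (tf a n) (hbf a n) (htf a n) (hstf a n))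
        simpa using this
      have heq : (a - π a) - (a - tf a n a) = (tf a n a - bf a n) + (bf a n - π a) := by abel
      rw [heq]; exact add_mem h1 h2
    exact Set.mem_add.2 ⟨π a, hπIrr a, a - π a, hmem, by abel⟩
  · ext x
    constructor
    · rintro ⟨hx1, hx2⟩
      have h1 := hπfix x hx1
      rw [hπIS x hx2] at h1
      simp [← h1]
    · intro hx
      rw [Set.mem_singleton_iff] at hx
      subst hx
      exact ⟨zero_mem_IrrS, zero_mem_IS⟩
theorem bw_key
    {M : Type*} [AddCommGroup M] [UniformSpace M] [IsUniformAddGroup M]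
    [CompleteSpace M] [T2Space M]
    {B : ℕ → AddSubgroup M} {T1 : Set (AddMonoid.End M)}
    (hBopen : ∀ n, IsOpen (B n : Set M))
    (hBanti : ∀ n, (B (n + 1) : Set M) ⊆ (B n : Set M))
    (hBbasis : (nhds (0 : M)).HasBasis (fun _ : ℕ => True) (fun n => (B n : Set M)))
    (hT1cont : ∀ t ∈ T1, Continuous t)
    (hper : Per T1 B = Set.univ)
    (hint : IrrS T1 ∩ IS T1 = {0})
    {p c b1 : M} {t1 : AddMonoid.End M} {n : ℕ}
    (hp : p ∈ IrrS T1) (hc : c ∈ IS T1) (ht1 : t1 ∈ TS T1) (hb1 : b1 ∈ IrrS T1)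
    (hs : StuckIn B T1 (t1 (p + c)) b1 n) : b1 - p ∈ B n := by
  classical
  set d := b1 - p with hd
  have hc0 : t1 c ∈ IS T1 := TS_maps_IS hT1cont ht1 hc
  have hP : ∀ s ∈ TS T1, s (t1 c) - d ∈ B n := by
    intro s hsM
    have h1 : s (t1 (p + c)) - b1 ∈ B n := hs s hsM
    have heq : s (t1 (p + c)) = p + s (t1 c) := by
      have hadd : (s * t1) (p + c) = (s * t1) p + (s * t1) c := map_add _ _ _
      have hp' : (s * t1) p = p := hp (s * t1) (mul_mem_TS hsM ht1)
      show (s * t1) (p + c) = p + (s * t1) c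
      rw [hadd, hp']
    rw [heq] at h1
    have heq2 : p + s (t1 c) - b1 = s (t1 c) - d := by rw [hd]; abel
    rwa [heq2] at h1
  have hstep : ∀ (k : ℕ) (x : M), ∃ u : AddMonoid.End M, ∃ β : M,
      u ∈ TS T1 ∧ β ∈ IrrS T1 ∧ StuckIn B T1 (u x) β (n + k + 1) := by
    intro k x
    obtain ⟨u, hu, β, hβ, hst⟩ := per_spec hper x (n + k + 1) one_mem_TS
    exact ⟨u, β, hu, hβ, hst⟩
  choose uf βf huf hβf hstf using hstep
  let cs : ℕ → M := fun k => Nat.rec (t1 c) (fun k ck => uf k ck ck) k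
  have hcsIS : ∀ k, cs k ∈ IS T1 := by
    intro k; induction k with
    | zero => exact hc0
    | succ k ih => exact TS_maps_IS hT1cont (huf k (cs k)) ih
  have hcsd : ∀ k, ∀ s ∈ TS T1, s (cs k) - d ∈ B n := by
    intro k; induction k with
    | zero => exact hP
    | succ k ih =>
        intro s hsM
        exact ih (s * uf k (cs k)) (mul_mem_TS hsM (huf k (cs k)))
  set γ : ℕ → M := fun k => βf k (cs k) with hγ
  have hstk : ∀ k, StuckIn B T1 (cs (k + 1)) (γ k) (n + k + 1) := fun k => hstf k (cs k)
  have hstuckall : ∀ k j, k ≤ j → StuckIn B T1 (cs (j + 1)) (γ k) (n + k + 1) := by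
    intro k j hkj
    induction hkj with
    | refl => exact hstk k
    | @step j hkj ih =>
        exact stuckIn_comp (a := cs (j + 1)) (huf (j + 1) (cs (j + 1))) ih
  have hctrl : ∀ k j, k ≤ j → γ j - γ k ∈ B k := by
    intro k j hkj
    have h1 : cs (j + 1) - γ j ∈ B (n + j + 1) := hstk j 1 one_mem_TS
    have h2 : cs (j + 1) - γ k ∈ B (n + k + 1) := hstuckall k j hkj 1 one_mem_TS
    have h1' : cs (j + 1) - γ j ∈ (B (n + k + 1) : Set M) :=
      B_anti hBanti (by omega) h1
    have heq : γ j - γ k = (cs (j + 1) - γ k) - (cs (j + 1) - γ j) := by abel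
    have hm : γ j - γ k ∈ B (n + k + 1) := by rw [heq]; exact sub_mem h2 h1'
    exact B_anti hBanti (by omega) hm
  obtain ⟨l, hl⟩ := exists_lim hBbasis hctrl
  have hlγ : ∀ k, l - γ k ∈ B (n + k + 1) := by
    intro k
    apply lim_mem_B hBopen hl
    refine Filter.eventually_atTop.2 ⟨k, fun j hj => ?_⟩
    have h2 : cs (j + 1) - γ k ∈ B (n + k + 1) := hstuckall k j hj 1 one_mem_TS
    have h1 : cs (j + 1) - γ j ∈ (B (n + k + 1) : Set M) :=
      B_anti hBanti (by omega) (hstk j 1 one_mem_TS)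
    have heq : γ j - γ k = (cs (j + 1) - γ k) - (cs (j + 1) - γ j) := by abel
    rw [heq]; exact sub_mem h2 h1
  have hlIrr : l ∈ IrrS T1 :=
    (isClosed_IrrS hT1cont).mem_of_tendsto hl
      (Filter.Eventually.of_forall (fun k => hβf k (cs k)))
  have hlIS : l ∈ IS T1 := by
    have hcl : l ∈ closure (IS T1) := by
      apply mem_closure_approx hBbasis
      intro m
      refine ⟨cs (m + 1), hcsIS (m + 1), ?_⟩
      have h1 : l - γ m ∈ B (n + m + 1) := hlγ m
      have h2 : cs (m + 1) - γ m ∈ B (n + m + 1) := hstk m 1 one_mem_TS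
      have heq : l - cs (m + 1) = (l - γ m) - (cs (m + 1) - γ m) := by abel
      have hm : l - cs (m + 1) ∈ B (n + m + 1) := by rw [heq]; exact sub_mem h1 h2
      exact B_anti hBanti (by omega) hm
    rwa [isClosed_IS.closure_eq] at hcl
  have hl0 : l = 0 := by
    have hmem : l ∈ IrrS T1 ∩ IS T1 := ⟨hlIrr, hlIS⟩
    rwa [hint, Set.mem_singleton_iff] at hmem
  have h1 : cs 1 - d ∈ B n := hcsd 1 1 one_mem_TS
  have h2 : cs 1 - γ 0 ∈ (B n : Set M) :=
    B_anti hBanti (by omega) (hstk 0 1 one_mem_TS)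
  have h3 : γ 0 ∈ (B n : Set M) := by
    have h4 := hlγ 0
    rw [hl0] at h4
    have h5 : γ 0 ∈ B (n + 0 + 1) := by simpa using neg_mem h4
    exact B_anti hBanti (by omega) h5
  have heq : d = (cs 1 - γ 0) - (cs 1 - d) + γ 0 := by abel
  rw [hd] at heq ⊢
  rw [heq]
  exact add_mem (sub_mem h2 h1) h3

theorem red_univ_iff_direct_sum
    {M : Type*} [AddCommGroup M] [UniformSpace M] [IsUniformAddGroup M]
    [CompleteSpace M] [T2Space M]
    (B : ℕ → AddSubgroup M)
    (hBopen : ∀ n, IsOpen (B n : Set M))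
    (hBanti : ∀ n, (B (n + 1) : Set M) ⊆ (B n : Set M))
    (hBbasis : (nhds (0 : M)).HasBasis (fun _ : ℕ => True) (fun n => (B n : Set M)))
    (hBsep : ⋂ n, (B n : Set M) = {0})
    (R : Set (AddMonoid.End M))
    (hRcont : ∀ r ∈ R, Continuous r)
    (hRsmall : ∀ r ∈ R, ∀ n : ℕ, ∀ a ∈ B n, r a ∈ B n)
    (T1 : Set (AddMonoid.End M))
    (hT1cont : ∀ t ∈ T1, Continuous t)
    (hT1comm : ∀ t ∈ T1, ∀ r ∈ R, ∀ a : M, t (r a) = r (t a))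
    (hequi : Equicont T1 B)
    (hper : Per T1 B = Set.univ) :
    Red T1 B = Set.univ ↔
      (IrrS T1 + IS T1 = Set.univ ∧ IrrS T1 ∩ IS T1 = {0}) := by
  constructor
  · intro hred
    exact forward_dir hBopen hBanti hBbasis hBsep hT1cont hequi hper hred
  · rintro ⟨hsum, hint⟩
    apply Set.eq_univ_of_forall
    intro a
    apply Set.mem_iInter.2
    intro n
    refine ⟨by rw [hper]; trivial, ?_⟩
    intro t1 ht1 t2 ht2 b1 hb1 b2 hb2 hs1 hs2
    have ha : a ∈ IrrS T1 + IS T1 := by rw [hsum]; trivial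
    obtain ⟨p, hpI, c, hcI, hpc⟩ := Set.mem_add.1 ha
    rw [← hpc] at hs1 hs2
    have k1 : b1 - p ∈ B n :=
      bw_key hBopen hBanti hBbasis hT1cont hper hint hpI hcI ht1 hb1 hs1
    have k2 : b2 - p ∈ B n :=
      bw_key hBopen hBanti hBbasis hT1cont hper hint hpI hcI ht2 hb2 hs2
    have heq : b1 - b2 = (b1 - p) - (b2 - p) := by abel
    have : b1 - b2 ∈ B n := by rw [heq]; exact sub_mem k1 k2
    exact this
end

section
/- Assume every element of T(S) is compatible with the partial order P on Y. Then for every μ ∈ Y, DIS(μ,P,S) equals the topological closure of the additive subgroup of M̄ generated by {a − t(a) : a ∈ DSM(μ,P), t ∈ T1(S)}, and also equals the topological closure of the additive subgroup of M̄ generated by {a − t(a) : a ∈ DSM(μ,P), t ∈ T(S)}. Moreover, every resolvable ambiguity of T1(S) is resolvable relative to P. -/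
open Set Filter Topology Pointwise

section CspanAux
variable {M : Type*} [AddCommGroup M] [TopologicalSpace M]
  {R : Set (AddMonoid.End M)} {Z : Set M}

def CspanFam (R : Set (AddMonoid.End M)) (Z : Set M) : Set (Set M) :=
  {N : Set M | Z ⊆ N ∧ IsClosed N ∧ (∃ H : AddSubgroup M, N = ↑H) ∧
      ∀ r ∈ R, ∀ a ∈ N, r a ∈ N}

lemma Cspan_subset_of_mem {N : Set M} (hN : N ∈ CspanFam R Z) : Cspan R Z ⊆ N :=
  Set.sInter_subset_of_mem hN

lemma subset_Cspan : Z ⊆ Cspan R Z :=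
  Set.subset_sInter fun _ hN => hN.1

lemma Cspan_isClosed : IsClosed (Cspan R Z) :=
  isClosed_sInter fun _ hN => hN.2.1

lemma zero_mem_Cspan : (0 : M) ∈ Cspan R Z :=
  Set.mem_sInter.2 fun N hN => by
    obtain ⟨H, rfl⟩ := hN.2.2.1; exact H.zero_mem

lemma add_mem_Cspan {a b : M} (ha : a ∈ Cspan R Z) (hb : b ∈ Cspan R Z) :
    a + b ∈ Cspan R Z :=
  Set.mem_sInter.2 fun N hN => by
    obtain ⟨H, rfl⟩ := hN.2.2.1
    exact H.add_mem (Set.mem_sInter.1 ha _ hN) (Set.mem_sInter.1 hb _ hN)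

lemma neg_mem_Cspan {a : M} (ha : a ∈ Cspan R Z) : -a ∈ Cspan R Z :=
  Set.mem_sInter.2 fun N hN => by
    obtain ⟨H, rfl⟩ := hN.2.2.1
    exact H.neg_mem (Set.mem_sInter.1 ha _ hN)

lemma sub_mem_Cspan {a b : M} (ha : a ∈ Cspan R Z) (hb : b ∈ Cspan R Z) :
    a - b ∈ Cspan R Z := by
  rw [sub_eq_add_neg]; exact add_mem_Cspan ha (neg_mem_Cspan hb)

lemma Cspan_stable {r : AddMonoid.End M} (hr : r ∈ R) {a : M} (ha : a ∈ Cspan R Z) :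
    r a ∈ Cspan R Z :=
  Set.mem_sInter.2 fun N hN => hN.2.2.2 r hr a (Set.mem_sInter.1 ha _ hN)

def CspanSubgroup (R : Set (AddMonoid.End M)) (Z : Set M) : AddSubgroup M where
  carrier := Cspan R Z
  zero_mem' := zero_mem_Cspan
  add_mem' := add_mem_Cspan
  neg_mem' := neg_mem_Cspan

lemma Cspan_mem_fam : Cspan R Z ∈ CspanFam R Z :=
  ⟨subset_Cspan, Cspan_isClosed, ⟨CspanSubgroup R Z, rfl⟩,
    fun _ hr _ ha => Cspan_stable hr ha⟩

lemma Cspan_le_Cspan {Z' : Set M} (h : Z ⊆ Cspan R Z') : Cspan R Z ⊆ Cspan R Z' :=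
  Cspan_subset_of_mem ⟨h, Cspan_mem_fam.2.1, Cspan_mem_fam.2.2.1, Cspan_mem_fam.2.2.2⟩

end CspanAux

lemma TS_continuous {M : Type*} [AddCommGroup M] [TopologicalSpace M]
    {T1 : Set (AddMonoid.End M)} (h : ∀ t ∈ T1, Continuous t) :
    ∀ t ∈ TS T1, Continuous t := by
  intro t ht
  refine Submonoid.closure_induction (fun x hx => h x hx) ?_ ?_ ht
  · simpa [AddMonoid.End.one_apply] using (continuous_id : Continuous fun a : M => a)
  · intro x y _ _ hx hy
    exact hx.comp hy

lemma TS_comm {M : Type*} [AddCommGroup M]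
    {T1 : Set (AddMonoid.End M)} {R : Set (AddMonoid.End M)}
    (h : ∀ t ∈ T1, ∀ r ∈ R, ∀ a : M, t (r a) = r (t a)) :
    ∀ t ∈ TS T1, ∀ r ∈ R, ∀ a : M, t (r a) = r (t a) := by
  intro t ht
  refine Submonoid.closure_induction (fun x hx => h x hx) ?_ ?_ ht
  · intro r _ a; simp [AddMonoid.End.one_apply]
  · intro x y _ _ hx hy r hr a
    show x (y (r a)) = r (x (y a))
    rw [hy r hr a, hx r hr (y a)]


theorem DIS_characterisation_and_relative_resolvability
    {M : Type*} [AddCommGroup M] [UniformSpace M] [IsUniformAddGroup M]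
    [CompleteSpace M] [T2Space M]
    (B : ℕ → AddSubgroup M)
    (hBopen : ∀ n, IsOpen (B n : Set M))
    (hBanti : ∀ n, (B (n + 1) : Set M) ⊆ (B n : Set M))
    (hBbasis : (nhds (0 : M)).HasBasis (fun _ : ℕ => True) (fun n => (B n : Set M)))
    (hBsep : ⋂ n, (B n : Set M) = {0})
    (R : Set (AddMonoid.End M))
    (hRcont : ∀ r ∈ R, Continuous r)
    (hRsmall : ∀ r ∈ R, ∀ n : ℕ, ∀ a ∈ B n, r a ∈ B n)
    (T1 : Set (AddMonoid.End M))
    (hT1cont : ∀ t ∈ T1, Continuous t)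
    (hT1comm : ∀ t ∈ T1, ∀ r ∈ R, ∀ a : M, t (r a) = r (t a))
    (Y : Set M)
    (P : M → M → Prop)
    (hPirr : ∀ μ, ¬ P μ μ)
    (hPtrans : ∀ μ ν ρ, P μ ν → P ν ρ → P μ ρ)
    (hcompat : ∀ t ∈ TS T1, Compatible R Y P t) :
    (∀ μ ∈ Y,
        DIS R Y P T1 μ =
          closure (AddSubgroup.closure
            {x : M | ∃ a ∈ DSM R Y P μ, ∃ t ∈ T1, x = a - t a} : Set M) ∧
        DIS R Y P T1 μ =
          closure (AddSubgroup.closure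
            {x : M | ∃ a ∈ DSM R Y P μ, ∃ t ∈ TS T1, x = a - t a} : Set M)) ∧
    (∀ μ ∈ Y, ∀ t1 ∈ T1, ∀ t2 ∈ T1, t1 μ ≠ μ → t2 μ ≠ μ →
      (∀ n : ℕ, ∃ t3 ∈ TS T1, ∃ t4 ∈ TS T1, t3 (t1 μ) - t4 (t2 μ) ∈ B n) →
      t1 μ - t2 μ ∈ DIS R Y P T1 μ) := by
  classical
  have tsCont : ∀ t ∈ TS T1, Continuous t := TS_continuous hT1cont
  have tsComm : ∀ t ∈ TS T1, ∀ r ∈ R, ∀ a : M, t (r a) = r (t a) := TS_comm hT1comm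
  have hT1sub : T1 ⊆ TS T1 := fun t ht => Submonoid.subset_closure ht
  -- DSM monotonicity
  have hDSMmono : ∀ ν μ : M, P ν μ → DSM R Y P ν ⊆ DSM R Y P μ := by
    intro ν μ h
    refine Cspan_le_Cspan ?_
    intro ρ hρ
    exact subset_Cspan ⟨hρ.1, hPtrans _ _ _ hρ.2 h⟩
  -- elements of TS T1 map DSM μ into itself
  have hTSmapsDSM : ∀ μ : M, ∀ t ∈ TS T1, ∀ a ∈ DSM R Y P μ, t a ∈ DSM R Y P μ := by
    intro μ t ht a ha
    have key : DSM R Y P μ ⊆ {a : M | a ∈ DSM R Y P μ ∧ t a ∈ DSM R Y P μ} := by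
      refine Cspan_subset_of_mem ⟨?_, ?_, ?_, ?_⟩
      · intro ν hν
        refine ⟨subset_Cspan hν, ?_⟩
        rcases hcompat t ht ν hν.1 with h | h
        · rw [h]; exact subset_Cspan hν
        · exact hDSMmono ν μ hν.2 h
      · exact (Cspan_isClosed).inter ((Cspan_isClosed).preimage (tsCont t ht))
      · exact ⟨CspanSubgroup R _ ⊓ AddSubgroup.comap (t : M →+ M) (CspanSubgroup R _), rfl⟩
      · intro r hr a ha
        exact ⟨Cspan_stable hr ha.1, by
          rw [tsComm t ht r hr a]; exact Cspan_stable hr ha.2⟩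
    exact (key ha).2
  -- Key lemma B
  have keyB : ∀ μ : M, ∀ t ∈ TS T1, ∀ a ∈ DSM R Y P μ, a - t a ∈ DIS R Y P T1 μ := by
    intro μ t ht
    refine Submonoid.closure_induction (motive := fun t _ => ∀ a ∈ DSM R Y P μ,
        a - t a ∈ DIS R Y P T1 μ) ?_ ?_ ?_ ht
    · -- t ∈ T1
      intro t ht
      have key : DSM R Y P μ ⊆ {a : M | a - t a ∈ DIS R Y P T1 μ} := by
        refine Cspan_subset_of_mem ⟨?_, ?_, ?_, ?_⟩
        · intro ν hν
          exact subset_Cspan ⟨ν, hν.1, hν.2, t, ht, rfl⟩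
        · exact (Cspan_isClosed).preimage (continuous_id.sub (hT1cont t ht))
        · refine ⟨AddSubgroup.comap ((1 - t : AddMonoid.End M) : M →+ M)
            (CspanSubgroup R {x : M | ∃ ν ∈ Y, P ν μ ∧ ∃ s ∈ T1, x = ν - s ν}), ?_⟩
          ext a
          simp [AddSubgroup.mem_comap, AddMonoid.End.one_apply, CspanSubgroup]
          rfl
        · intro r hr a ha
          have : r a - t (r a) = r (a - t a) := by
            rw [map_sub, tsComm t (hT1sub ht) r hr a]
          simpa [this, DIS] using Cspan_stable hr ha
      exact fun a ha => key ha
    · intro a _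
      simpa [AddMonoid.End.one_apply, DIS] using zero_mem_Cspan
    · intro x y hx hy px py a ha
      have h1 : a - y a ∈ DIS R Y P T1 μ := py a ha
      have h2 : y a - x (y a) ∈ DIS R Y P T1 μ := px (y a) (hTSmapsDSM μ y hy a ha)
      have : a - (x * y) a = (a - y a) + (y a - x (y a)) := by
        show a - x (y a) = _
        abel
      rw [this]
      exact add_mem_Cspan h1 h2
  -- antitonicity of B
  have hBanti' : ∀ m n : ℕ, m ≤ n → ∀ a : M, a ∈ B n → a ∈ B m := by
    intro m n h
    induction h with
    | refl => exact fun a ha => ha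
    | step _ ih => exact fun a ha => ih a (hBanti _ ha)
  constructor
  · intro μ hμ
    set S1 : Set M := {x : M | ∃ a ∈ DSM R Y P μ, ∃ t ∈ T1, x = a - t a} with hS1
    set S2 : Set M := {x : M | ∃ a ∈ DSM R Y P μ, ∃ t ∈ TS T1, x = a - t a} with hS2
    have h21 : closure (AddSubgroup.closure S1 : Set M) ⊆
        closure (AddSubgroup.closure S2 : Set M) := by
      apply closure_mono
      exact AddSubgroup.closure_mono (fun x ⟨a, ha, t, ht, hx⟩ => ⟨a, ha, t, hT1sub ht, hx⟩)
    have h2D : closure (AddSubgroup.closure S2 : Set M) ⊆ DIS R Y P T1 μ := by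
      refine closure_minimal ?_ Cspan_isClosed
      have : AddSubgroup.closure S2 ≤ CspanSubgroup R
          {x | ∃ ν ∈ Y, P ν μ ∧ ∃ t ∈ T1, x = ν - t ν} := by
        refine (AddSubgroup.closure_le _).2 ?_
        rintro x ⟨a, ha, t, ht, rfl⟩
        exact keyB μ t ht a ha
      exact this
    have hD1 : DIS R Y P T1 μ ⊆ closure (AddSubgroup.closure S1 : Set M) := by
      refine Cspan_subset_of_mem ⟨?_, isClosed_closure, ?_, ?_⟩
      · rintro x ⟨ν, hν, hνμ, t, ht, rfl⟩
        exact subset_closure (AddSubgroup.subset_closure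
          ⟨ν, subset_Cspan ⟨hν, hνμ⟩, t, ht, rfl⟩)
      · exact ⟨(AddSubgroup.closure S1).topologicalClosure,
          (AddSubgroup.topologicalClosure_coe).symm⟩
      · intro r hr a ha
        have hmapsG : ∀ g ∈ AddSubgroup.closure S1, r g ∈ AddSubgroup.closure S1 := by
          have : AddSubgroup.closure S1 ≤
              AddSubgroup.comap (r : M →+ M) (AddSubgroup.closure S1) := by
            refine (AddSubgroup.closure_le _).2 ?_
            rintro x ⟨b, hb, t, ht, rfl⟩
            refine AddSubgroup.subset_closure ⟨r b, Cspan_stable hr hb, t, ht, ?_⟩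
            change r (b - t b) = r b - t (r b)
            rw [map_sub, tsComm t (hT1sub ht) r hr b]
          exact fun g hg => this hg
        exact map_mem_closure (hRcont r hr) ha hmapsG
    exact ⟨subset_antisymm hD1 (h21.trans h2D),
      subset_antisymm (hD1.trans h21) h2D⟩
  · intro μ hμ t1 ht1 t2 ht2 hne1 hne2 hres
    have hd1 : t1 μ ∈ DSM R Y P μ := by
      rcases hcompat t1 (hT1sub ht1) μ hμ with h | h
      · exact absurd h hne1
      · exact h
    have hd2 : t2 μ ∈ DSM R Y P μ := by
      rcases hcompat t2 (hT1sub ht2) μ hμ with h | h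
      · exact absurd h hne2
      · exact h
    choose t3 ht3 t4 ht4 hB using hres
    set d : ℕ → M := fun n =>
      (t1 μ - t3 n (t1 μ)) - (t2 μ - t4 n (t2 μ)) with hd
    have hdD : ∀ n, d n ∈ DIS R Y P T1 μ := fun n =>
      sub_mem_Cspan (keyB μ (t3 n) (ht3 n) (t1 μ) hd1)
        (keyB μ (t4 n) (ht4 n) (t2 μ) hd2)
    have hdiff : ∀ n, d n - (t1 μ - t2 μ) ∈ B n := by
      intro n
      have : d n - (t1 μ - t2 μ) = -(t3 n (t1 μ) - t4 n (t2 μ)) := by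
        simp only [hd]; abel
      rw [this]
      exact (B n).neg_mem (hB n)
    have htend0 : Tendsto (fun n => d n - (t1 μ - t2 μ)) atTop (𝓝 0) := by
      rw [hBbasis.tendsto_right_iff]
      intro n _
      filter_upwards [eventually_ge_atTop n] with k hk
      exact hBanti' n k hk _ (hdiff k)
    have htend : Tendsto d atTop (𝓝 (t1 μ - t2 μ)) := by
      have := htend0.add_const (t1 μ - t2 μ)
      simpa using this
    exact Cspan_isClosed.mem_of_tendsto htend (Eventually.of_forall hdD)
end

section
/- For every a ∈ Per(S) there exists b ∈ Irr(S) such that for every ε ∈ Ô there is some t ∈ T(S) for which t(a) is stuck in the coset b + ε; moreover this a and b satisfy a − b ∈ I(S). Consequently Per(S) ⊆ I(S) + Irr(S). -/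
open Set Filter Topology Pointwise

theorem persistently_reducible_near_normal_form
    {M : Type*} [AddCommGroup M] [UniformSpace M] [IsUniformAddGroup M]
    [CompleteSpace M] [T2Space M]
    (B : ℕ → AddSubgroup M)
    (hBopen : ∀ n, IsOpen (B n : Set M))
    (hBanti : ∀ n, (B (n + 1) : Set M) ⊆ (B n : Set M))
    (hBbasis : (nhds (0 : M)).HasBasis (fun _ : ℕ => True) (fun n => (B n : Set M)))
    (hBsep : ⋂ n, (B n : Set M) = {0})
    (R : Set (AddMonoid.End M))
    (hRcont : ∀ r ∈ R, Continuous r)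
    (hRsmall : ∀ r ∈ R, ∀ n : ℕ, ∀ a ∈ B n, r a ∈ B n)
    (T1 : Set (AddMonoid.End M))
    (hT1cont : ∀ t ∈ T1, Continuous t)
    (hT1comm : ∀ t ∈ T1, ∀ r ∈ R, ∀ a : M, t (r a) = r (t a)) :
    (∀ a ∈ Per T1 B, ∃ b ∈ IrrS T1,
        (∀ n : ℕ, ∃ t ∈ TS T1, Stuck T1 {x | x - b ∈ (B n : Set M)} (t a)) ∧
        a - b ∈ IS T1) ∧
    Per T1 B ⊆ IS T1 + IrrS T1 := by
  classical
  -- continuity of elements of TS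
  have tsCont : ∀ t ∈ TS T1, Continuous t := by
    intro t ht
    induction ht using Submonoid.closure_induction with
    | mem x hx => exact hT1cont x hx
    | one => exact continuous_id
    | mul f g _ _ hf hg => exact hf.comp hg
  have hmono : ∀ {n m : ℕ}, n ≤ m → (B m : Set M) ⊆ (B n : Set M) := by
    intro n m h
    induction h with
    | refl => exact subset_rfl
    | step h ih => exact fun x hx => ih (hBanti _ hx)
  have main : ∀ a ∈ Per T1 B, ∃ b ∈ IrrS T1,
      (∀ n : ℕ, ∃ t ∈ TS T1, Stuck T1 {x | x - b ∈ (B n : Set M)} (t a)) ∧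
      a - b ∈ IS T1 := by
    intro a ha
    have ha' : ∀ n : ℕ, a ∈ PerE T1 (B n) := by
      intro n; exact Set.mem_iInter.mp ha n
    have key : ∀ (n : ℕ) (t1 : AddMonoid.End M), t1 ∈ TS T1 →
        ∃ t2 ∈ TS T1, ∃ b ∈ IrrS T1,
          Stuck T1 {x | x - b ∈ (B n : Set M)} (t2 (t1 a)) :=
      fun n t1 ht1 => ha' n t1 ht1
    choose! t2f ht2f bf hbf hstuck using key
    -- recursively defined sequence of compositions
    set s : ℕ → AddMonoid.End M :=
      fun n => Nat.rec (1 : AddMonoid.End M) (fun k sk => t2f k sk * sk) n with hs_def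
    have hs0 : s 0 = 1 := rfl
    have hs_succ : ∀ n, s (n + 1) = t2f n (s n) * s n := fun n => rfl
    have hsTS : ∀ n, s n ∈ TS T1 := by
      intro n
      induction n with
      | zero => exact Submonoid.one_mem _
      | succ k ih => exact Submonoid.mul_mem _ (ht2f k (s k) ih) ih
    set bn : ℕ → M := fun n => bf n (s n) with hbn_def
    have hbnIrr : ∀ n, bn n ∈ IrrS T1 := fun n => hbf n (s n) (hsTS n)
    have hstuck' : ∀ n, ∀ t ∈ TS T1, t (s (n + 1) a) - bn n ∈ (B n : Set M) := by
      intro n t ht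
      have := hstuck n (s n) (hsTS n) t ht
      simpa [hs_succ n] using this
    -- factorization : s m for m ≥ n factors through s n
    have hfact : ∀ n m : ℕ, n ≤ m → ∃ u ∈ TS T1, s m = u * s n := by
      intro n m h
      induction h with
      | refl => exact ⟨1, Submonoid.one_mem _, (one_mul _).symm⟩
      | step h ih =>
        obtain ⟨u, hu, hueq⟩ := ih
        exact ⟨t2f _ (s _) * u, Submonoid.mul_mem _ (ht2f _ (s _) (hsTS _)) hu,
          by rw [mul_assoc, ← hueq, ← hs_succ]⟩
    -- key estimate
    have hest : ∀ n m : ℕ, n + 1 ≤ m → s m a - bn n ∈ (B n : Set M) := by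
      intro n m h
      obtain ⟨u, hu, hueq⟩ := hfact (n + 1) m h
      have := hstuck' n u hu
      rwa [show u (s (n+1) a) = s m a by rw [hueq]; rfl] at this
    have hcauchy_est : ∀ n m : ℕ, n ≤ m → bn m - bn n ∈ (B n : Set M) := by
      intro n m h
      have h1 : s (m + 1) a - bn m ∈ (B m : Set M) := hest m (m + 1) le_rfl
      have h2 : s (m + 1) a - bn n ∈ (B n : Set M) :=
        hest n (m + 1) (Nat.succ_le_succ h)
      have h1' : s (m + 1) a - bn m ∈ (B n : Set M) := hmono h h1
      have := sub_mem h2 h1'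
      simpa using this
    -- uniformity basis
    have hU : (uniformity M).HasBasis (fun _ : ℕ => True)
        (fun n => {p : M × M | p.2 - p.1 ∈ (B n : Set M)}) := by
      rw [uniformity_eq_comap_nhds_zero M]
      exact hBbasis.comap _
    have hcauchy : CauchySeq bn := by
      rw [hU.cauchySeq_iff]
      intro i _
      refine ⟨i, fun m hm n hn => ?_⟩
      have h1 : bn m - bn i ∈ (B i : Set M) := hcauchy_est i m hm
      have h2 : bn n - bn i ∈ (B i : Set M) := hcauchy_est i n hn
      have := sub_mem h2 h1
      simpa using this
    obtain ⟨b, hb⟩ := cauchySeq_tendsto_of_complete hcauchy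
    have hBclosed : ∀ n, IsClosed (B n : Set M) := fun n =>
      AddSubgroup.isClosed_of_isOpen (B n) (hBopen n)
    have hbdiff : ∀ n, b - bn n ∈ (B n : Set M) := by
      intro n
      have htend : Tendsto (fun m => bn m - bn n) atTop (nhds (b - bn n)) :=
        hb.sub tendsto_const_nhds
      refine (hBclosed n).mem_of_tendsto htend ?_
      filter_upwards [eventually_ge_atTop n] with m hm using hcauchy_est n m hm
    have hbIrr : b ∈ IrrS T1 := by
      intro t ht
      have h1 : Tendsto (fun n => t (bn n)) atTop (nhds (t b)) :=
        ((tsCont t ht).tendsto b).comp hb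
      have h2 : (fun n => t (bn n)) = bn := by
        funext n; exact hbnIrr n t ht
      rw [h2] at h1
      exact tendsto_nhds_unique h1 hb
    refine ⟨b, hbIrr, ?_, ?_⟩
    · intro n
      refine ⟨s (n + 1), hsTS (n + 1), ?_⟩
      intro t ht
      have h1 : t (s (n + 1) a) - bn n ∈ (B n : Set M) := hstuck' n t ht
      have h2 : b - bn n ∈ (B n : Set M) := hbdiff n
      have := sub_mem h1 h2
      simpa using this
    · -- a - b ∈ IS T1
      have hgen : ∀ n : ℕ, a - s (n + 1) a ∈
          (AddSubgroup.closure {x : M | ∃ c : M, ∃ t ∈ TS T1, x = c - t c} : Set M) := by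
        intro n
        exact AddSubgroup.subset_closure ⟨a, s (n + 1), hsTS (n + 1), rfl⟩
      have htend : Tendsto (fun n => a - s (n + 1) a) atTop (nhds (a - b)) := by
        have hdiff : ∀ n, (a - b) - (a - s (n + 1) a) = s (n + 1) a - b := by
          intro n; abel
        have h1 : Tendsto (fun n => s (n + 1) a - b) atTop (nhds 0) := by
          rw [hBbasis.tendsto_right_iff]
          intro i _
          filter_upwards [eventually_ge_atTop i] with n hn
          have h1 : s (n + 1) a - bn n ∈ (B n : Set M) := hest n (n + 1) le_rfl
          have h2 : b - bn n ∈ (B n : Set M) := hbdiff n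
          have h3 : s (n + 1) a - b ∈ (B n : Set M) := by
            have := sub_mem h1 h2; simpa using this
          exact hmono hn h3
        have h2 : Tendsto (fun n => (a - b) - (s (n + 1) a - b)) atTop
            (nhds ((a - b) - 0)) := tendsto_const_nhds.sub h1
        simpa using h2
      exact mem_closure_of_tendsto htend (Filter.Eventually.of_forall hgen)
  refine ⟨main, ?_⟩
  intro a ha
  obtain ⟨b, hbIrr, _, hab⟩ := main a ha
  exact ⟨a - b, hab, b, hbIrr, by module⟩
end

section
/- Red(S) is an additive subgroup of M̄ with r(Red(S)) ⊆ Red(S) for every r ∈ R and t(Red(S)) ⊆ Red(S) for every t ∈ T(S). For every a ∈ Red(S) there is a unique b ∈ Irr(S) such that for every ε ∈ Ô there exists t ∈ T(S) with t(a) stuck in b + ε; writing t^S(a) for this b, the resulting map t^S : Red(S) → Irr(S) is additive, satisfies t^S(b) = b for every b ∈ Irr(S), satisfies t^S(t(a)) = t^S(a) for all a ∈ Red(S) and t ∈ T(S), and its kernel is contained in I(S). Moreover, every continuous additive group endomorphism r of M̄ with r ∘ t = t ∘ r for all t ∈ T(S) maps Red(S) into itself and satisfies t^S(r(a)) = r(t^S(a))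 for all a ∈ Red(S). -/
open Set Filter Topology Pointwise

namespace RedAux

variable {M : Type*} [AddCommGroup M] {T1 : Set (AddMonoid.End M)} {B : ℕ → AddSubgroup M}

theorem one_mem_TS (T1 : Set (AddMonoid.End M)) : (1 : AddMonoid.End M) ∈ TS T1 :=
  Submonoid.one_mem _

theorem mul_mem_TS {t s : AddMonoid.End M} (ht : t ∈ TS T1) (hs : s ∈ TS T1) :
    t * s ∈ TS T1 := Submonoid.mul_mem _ ht hs

theorem TS_continuous [TopologicalSpace M] (h : ∀ t ∈ T1, Continuous t)
    {t : AddMonoid.End M} (ht : t ∈ TS T1) : Continuous t := by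
  induction ht using Submonoid.closure_induction with
  | mem x hx => exact h x hx
  | one => exact continuous_id
  | mul x y hx hy ihx ihy => exact ihx.comp ihy

theorem TS_comm {r : AddMonoid.End M} (h : ∀ t ∈ T1, ∀ x : M, r (t x) = t (r x))
    {t : AddMonoid.End M} (ht : t ∈ TS T1) : ∀ x : M, r (t x) = t (r x) := by
  induction ht using Submonoid.closure_induction with
  | mem x hx => exact h x hx
  | one => intro x; rfl
  | mul x y hx hy ihx ihy => intro z; show r (x (y z)) = x (y (r z)); rw [ihx, ihy]

theorem irr_map {r : AddMonoid.End M} (h : ∀ t ∈ TS T1, ∀ x : M, r (t x) = t (r x))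
    {b : M} (hb : b ∈ IrrS T1) : r b ∈ IrrS T1 := fun t ht => by
  rw [← h t ht b, hb t ht]

theorem irr_add {b c : M} (hb : b ∈ IrrS T1) (hc : c ∈ IrrS T1) : b + c ∈ IrrS T1 :=
  fun t ht => by rw [map_add, hb t ht, hc t ht]

theorem irr_neg {b : M} (hb : b ∈ IrrS T1) : -b ∈ IrrS T1 :=
  fun t ht => by rw [map_neg, hb t ht]

theorem irr_zero : (0 : M) ∈ IrrS T1 := fun t _ => map_zero t

theorem stuck_mem {N : Set M} {a : M} (h : Stuck T1 N a) : a ∈ N := h 1 (one_mem_TS T1)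

theorem stuck_apply {N : Set M} {a : M} (h : Stuck T1 N a) {s : AddMonoid.End M}
    (hs : s ∈ TS T1) : Stuck T1 N (s a) := fun t ht => h (t * s) (mul_mem_TS ht hs)

theorem stuck_coset_congr {G : AddSubgroup M} {b c a : M} (hbc : b - c ∈ G)
    (h : Stuck T1 {x | x - b ∈ (G : Set M)} a) : Stuck T1 {x | x - c ∈ (G : Set M)} a := by
  intro t ht
  have h1 := h t ht
  show t a - c ∈ (G : Set M)
  have e : t a - c = (t a - b) + (b - c) := by abel
  rw [e]; exact G.add_mem h1 hbc

theorem stuck_coset_add {G : AddSubgroup M} {b b' x x' : M}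
    (h : Stuck T1 {y | y - b ∈ (G : Set M)} x) (h' : Stuck T1 {y | y - b' ∈ (G : Set M)} x') :
    Stuck T1 {y | y - (b + b') ∈ (G : Set M)} (x + x') := by
  intro t ht
  show t (x + x') - (b + b') ∈ (G : Set M)
  have e : t (x + x') - (b + b') = (t x - b) + (t x' - b') := by rw [map_add]; abel
  rw [e]; exact G.add_mem (h t ht) (h' t ht)

theorem red_perE {a : M} (h : a ∈ Red T1 B) (n : ℕ) : a ∈ PerE T1 (B n) :=
  Set.mem_iInter.1 (Set.mem_iInter.1 h n).1 n

theorem red_uniqE {a : M} (h : a ∈ Red T1 B) (n : ℕ) : a ∈ UniqE T1 (B n) :=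
  (Set.mem_iInter.1 h n).2

theorem mem_red_of {a : M} (hp : ∀ n, a ∈ PerE T1 (B n)) (hu : ∀ n, a ∈ UniqE T1 (B n)) :
    a ∈ Red T1 B :=
  Set.mem_iInter.2 fun n => ⟨Set.mem_iInter.2 hp, hu n⟩

theorem B_anti (hBanti : ∀ n, (B (n + 1) : Set M) ⊆ (B n : Set M)) {n m : ℕ} (h : n ≤ m) :
    (B m : Set M) ⊆ (B n : Set M) := by
  obtain ⟨k, rfl⟩ := Nat.exists_eq_add_of_le h
  induction k with
  | zero => exact subset_rfl
  | succ k ih => exact (hBanti (n + k)).trans (ih (Nat.le_add_right n k))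


/-- The normal-form predicate. -/
def NF (B : ℕ → AddSubgroup M) (T1 : Set (AddMonoid.End M)) (a b : M) : Prop :=
  b ∈ IrrS T1 ∧ ∀ n : ℕ, ∃ t ∈ TS T1, Stuck T1 {x | x - b ∈ (B n : Set M)} (t a)

theorem NF_unique (hBsep : ⋂ n, (B n : Set M) = {0}) {a b1 b2 : M}
    (ha : ∀ n, a ∈ UniqE T1 (B n)) (h1 : NF B T1 a b1) (h2 : NF B T1 a b2) : b1 = b2 := by
  have h : b1 - b2 ∈ ⋂ n, (B n : Set M) := by
    refine Set.mem_iInter.2 fun n => ?_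
    obtain ⟨t1, ht1, hs1⟩ := h1.2 n
    obtain ⟨t2, ht2, hs2⟩ := h2.2 n
    exact ha n t1 ht1 t2 ht2 b1 h1.1 b2 h2.1 hs1 hs2
  rw [hBsep] at h
  exact sub_eq_zero.1 h

theorem NF_exists [UniformSpace M] [IsUniformAddGroup M] [CompleteSpace M] [T2Space M]
    (hBopen : ∀ n, IsOpen (B n : Set M))
    (hBanti : ∀ n, (B (n + 1) : Set M) ⊆ (B n : Set M))
    (hBbasis : (nhds (0 : M)).HasBasis (fun _ : ℕ => True) (fun n => (B n : Set M)))
    (hT1cont : ∀ t ∈ T1, Continuous t)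
    {a : M} (ha : a ∈ Red T1 B) : ∃ b, NF B T1 a b := by
  have hper : ∀ n : ℕ, ∃ t ∈ TS T1, ∃ c ∈ IrrS T1,
      Stuck T1 {x | x - c ∈ (B n : Set M)} (t a) := by
    intro n
    obtain ⟨t2, ht2, c, hc, hst⟩ := red_perE ha n 1 (one_mem_TS T1)
    exact ⟨t2, ht2, c, hc, hst⟩
  choose t ht c hc hst using hper
  have hclosed : ∀ n, IsClosed (B n : Set M) := fun n => (B n).isClosed_of_isOpen (hBopen n)
  have hdiff : ∀ {n m : ℕ}, n ≤ m → c n - c m ∈ B n := by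
    intro n m hnm
    refine red_uniqE ha n (t n) (ht n) (t m) (ht m) (c n) (hc n) (c m) (hc m) (hst n) ?_
    exact fun s hs => B_anti hBanti hnm (hst m s hs)
  have hcauchy : CauchySeq c := by
    have hb : (uniformity M).HasBasis (fun _ : ℕ => True)
        (fun n => {p : M × M | p.2 - p.1 ∈ (B n : Set M)}) := by
      rw [uniformity_eq_comap_nhds_zero M]
      exact hBbasis.comap _
    rw [hb.cauchySeq_iff]
    intro n _
    refine ⟨n, fun k hk l hl => ?_⟩
    show c l - c k ∈ (B n : Set M)
    rcases le_total k l with h | h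
    · have h1 := B_anti hBanti hk (hdiff h)
      have h2 := (B n).neg_mem h1
      rwa [neg_sub] at h2
    · exact B_anti hBanti hl (hdiff h)
  obtain ⟨b, hbl⟩ := cauchySeq_tendsto_of_complete hcauchy
  have hbIrr : b ∈ IrrS T1 := by
    have hcl : IsClosed (IrrS T1) := by
      have e : IrrS T1 = ⋂ s ∈ TS T1, {x | s x = x} := by
        ext x; simp [IrrS, Set.mem_iInter]
      rw [e]
      exact isClosed_biInter fun s hs =>
        isClosed_eq (TS_continuous hT1cont hs) continuous_id
    exact hcl.mem_of_tendsto hbl (Filter.Eventually.of_forall hc)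
  have hcb : ∀ n, c n - b ∈ B n := by
    intro n
    have htend : Filter.Tendsto (fun m => c n - c m) Filter.atTop (nhds (c n - b)) :=
      Filter.Tendsto.const_sub _ hbl
    refine (hclosed n).mem_of_tendsto htend ?_
    filter_upwards [Filter.eventually_ge_atTop n] with m hm using hdiff hm
  refine ⟨b, hbIrr, fun n => ⟨t n, ht n, fun s hs => ?_⟩⟩
  show s (t n a) - b ∈ (B n : Set M)
  have h1 : s (t n a) - c n ∈ B n := hst n s hs
  have e : s (t n a) - b = (s (t n a) - c n) + (c n - b) := by abel
  rw [e]; exact (B n).add_mem h1 (hcb n)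


theorem zero_mem_red : (0 : M) ∈ Red T1 B := by
  refine mem_red_of (fun n => ?_) (fun n => ?_)
  · intro t1 ht1
    refine ⟨1, one_mem_TS T1, 0, irr_zero, fun s hs => ?_⟩
    show s ((1 : AddMonoid.End M) (t1 (0 : M))) - 0 ∈ (B n : Set M)
    simp only [map_zero, sub_zero]
    exact (B n).zero_mem
  · intro t1 ht1 t2 ht2 b1 hb1 b2 hb2 hs1 hs2
    have h1 : t1 (0 : M) - b1 ∈ B n := stuck_mem (N := {x | x - b1 ∈ (B n : Set M)}) hs1
    have h2 : t2 (0 : M) - b2 ∈ B n := stuck_mem (N := {x | x - b2 ∈ (B n : Set M)}) hs2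
    rw [map_zero] at h1 h2
    have e : b1 - b2 = (0 - b2) - (0 - b1) := by abel
    show b1 - b2 ∈ (B n : Set M)
    rw [e]; exact (B n).sub_mem h2 h1

theorem neg_mem_red {a : M} (ha : a ∈ Red T1 B) : -a ∈ Red T1 B := by
  refine mem_red_of (fun n => ?_) (fun n => ?_)
  · intro t1 ht1
    obtain ⟨t2, ht2, b, hb, hs⟩ := red_perE ha n t1 ht1
    refine ⟨t2, ht2, -b, irr_neg hb, fun s hs' => ?_⟩
    show s (t2 (t1 (-a))) - (-b) ∈ (B n : Set M)
    have h1 : s (t2 (t1 a)) - b ∈ B n := hs s hs'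
    have e : s (t2 (t1 (-a))) - (-b) = -(s (t2 (t1 a)) - b) := by
      simp only [map_neg]; abel
    rw [e]; exact (B n).neg_mem h1
  · intro t1 ht1 t2 ht2 b1 hb1 b2 hb2 hs1 hs2
    have key : ∀ (u : AddMonoid.End M), u ∈ TS T1 → ∀ (d : M),
        Stuck T1 {x | x - d ∈ (B n : Set M)} (u (-a)) →
        Stuck T1 {x | x - (-d) ∈ (B n : Set M)} (u a) := by
      intro u hu d hd s hs
      show s (u a) - (-d) ∈ (B n : Set M)
      have h1 : s (u (-a)) - d ∈ B n := hd s hs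
      have e : s (u a) - (-d) = -(s (u (-a)) - d) := by simp only [map_neg]; abel
      rw [e]; exact (B n).neg_mem h1
    have h := red_uniqE ha n t1 ht1 t2 ht2 (-b1) (irr_neg hb1) (-b2) (irr_neg hb2)
      (key t1 ht1 b1 hs1) (key t2 ht2 b2 hs2)
    have e : b1 - b2 = -(-b1 - -b2) := by abel
    show b1 - b2 ∈ (B n : Set M)
    rw [e]; exact (B n).neg_mem h

theorem add_aux {a a' b1 : M} (ha : a ∈ Red T1 B) (ha' : a' ∈ Red T1 B) (n : ℕ)
    {t1 : AddMonoid.End M} (ht1 : t1 ∈ TS T1)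
    (hs1 : Stuck T1 {x | x - b1 ∈ (B n : Set M)} (t1 (a + a'))) :
    ∃ c ∈ IrrS T1, ∃ c' ∈ IrrS T1, ∃ u ∈ TS T1, b1 - (c + c') ∈ B n ∧
      Stuck T1 {x | x - c ∈ (B n : Set M)} (u (t1 a)) ∧
      Stuck T1 {x | x - c' ∈ (B n : Set M)} (u (t1 a')) := by
  obtain ⟨s, hsmem, c, hcirr, hsc⟩ := red_perE ha n t1 ht1
  obtain ⟨s', hs'mem, c', hc'irr, hsc'⟩ := red_perE ha' n (s * t1) (mul_mem_TS hsmem ht1)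
  refine ⟨c, hcirr, c', hc'irr, s' * s, mul_mem_TS hs'mem hsmem, ?_, ?_, ?_⟩
  · have h1 : s' (s (t1 (a + a'))) - b1 ∈ B n :=
      stuck_mem (N := {x | x - b1 ∈ (B n : Set M)}) (stuck_apply (stuck_apply hs1 hsmem) hs'mem)
    have h2 : s' (s (t1 a)) - c ∈ B n := stuck_mem (N := {x | x - c ∈ (B n : Set M)}) (stuck_apply hsc hs'mem)
    have h3 : s' (s (t1 a')) - c' ∈ B n := stuck_mem (N := {x | x - c' ∈ (B n : Set M)}) hsc'
    have e : b1 - (c + c') =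
        ((s' (s (t1 a)) - c) + (s' (s (t1 a')) - c')) - (s' (s (t1 (a + a'))) - b1) := by
      simp only [map_add]; abel
    rw [e]; exact (B n).sub_mem ((B n).add_mem h2 h3) h1
  · exact stuck_apply hsc hs'mem
  · exact hsc'

theorem add_mem_red {a a' : M} (ha : a ∈ Red T1 B) (ha' : a' ∈ Red T1 B) :
    a + a' ∈ Red T1 B := by
  refine mem_red_of (fun n => ?_) (fun n => ?_)
  · intro t1 ht1
    obtain ⟨t2, ht2, b, hb, hsb⟩ := red_perE ha n t1 ht1
    obtain ⟨t3, ht3, b', hb', hsb'⟩ := red_perE ha' n (t2 * t1) (mul_mem_TS ht2 ht1)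
    refine ⟨t3 * t2, mul_mem_TS ht3 ht2, b + b', irr_add hb hb', fun s hs => ?_⟩
    show s (t3 (t2 (t1 (a + a')))) - (b + b') ∈ (B n : Set M)
    have h1 : s (t3 (t2 (t1 a))) - b ∈ B n := (stuck_apply hsb ht3) s hs
    have h2 : s (t3 (t2 (t1 a'))) - b' ∈ B n := hsb' s hs
    have e : s (t3 (t2 (t1 (a + a')))) - (b + b') =
        (s (t3 (t2 (t1 a))) - b) + (s (t3 (t2 (t1 a'))) - b') := by
      simp only [map_add]; abel
    rw [e]; exact (B n).add_mem h1 h2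
  · intro t1 ht1 t2 ht2 b1 hb1 b2 hb2 hs1 hs2
    obtain ⟨c, hcI, c', hc'I, u, hu, hb1c, hsc, hsc'⟩ := add_aux ha ha' n ht1 hs1
    obtain ⟨d, hdI, d', hd'I, v, hv, hb2d, hsd, hsd'⟩ := add_aux ha ha' n ht2 hs2
    have h1 : c - d ∈ B n := red_uniqE ha n (u * t1) (mul_mem_TS hu ht1)
      (v * t2) (mul_mem_TS hv ht2) c hcI d hdI hsc hsd
    have h2 : c' - d' ∈ B n := red_uniqE ha' n (u * t1) (mul_mem_TS hu ht1)
      (v * t2) (mul_mem_TS hv ht2) c' hc'I d' hd'I hsc' hsd'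
    have e : b1 - b2 = (b1 - (c + c')) - (b2 - (d + d')) + (c - d) + (c' - d') := by abel
    show b1 - b2 ∈ (B n : Set M)
    rw [e]
    exact (B n).add_mem ((B n).add_mem ((B n).sub_mem hb1c hb2d) h1) h2

theorem ts_mem_red {a : M} {t0 : AddMonoid.End M} (ht0 : t0 ∈ TS T1) (ha : a ∈ Red T1 B) :
    t0 a ∈ Red T1 B := by
  refine mem_red_of (fun n => ?_) (fun n => ?_)
  · intro t1 ht1
    obtain ⟨t2, ht2, b, hb, hs⟩ := red_perE ha n (t1 * t0) (mul_mem_TS ht1 ht0)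
    exact ⟨t2, ht2, b, hb, hs⟩
  · intro t1 ht1 t2 ht2 b1 hb1 b2 hb2 hs1 hs2
    exact red_uniqE ha n (t1 * t0) (mul_mem_TS ht1 ht0) (t2 * t0) (mul_mem_TS ht2 ht0)
      b1 hb1 b2 hb2 hs1 hs2

theorem irr_mem_red {b : M} (hb : b ∈ IrrS T1) : b ∈ Red T1 B := by
  refine mem_red_of (fun n => ?_) (fun n => ?_)
  · intro t1 ht1
    refine ⟨1, one_mem_TS T1, b, hb, fun s hs => ?_⟩
    show s ((1 : AddMonoid.End M) (t1 b)) - b ∈ (B n : Set M)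
    have e : (1 : AddMonoid.End M) (t1 b) = t1 b := rfl
    rw [e, hb t1 ht1, hb s hs, sub_self]
    exact (B n).zero_mem
  · intro t1 ht1 t2 ht2 b1 hb1 b2 hb2 hs1 hs2
    have h1 : t1 b - b1 ∈ B n := stuck_mem (N := {x | x - b1 ∈ (B n : Set M)}) hs1
    have h2 : t2 b - b2 ∈ B n := stuck_mem (N := {x | x - b2 ∈ (B n : Set M)}) hs2
    rw [hb t1 ht1] at h1
    rw [hb t2 ht2] at h2
    have e : b1 - b2 = (b - b2) - (b - b1) := by abel
    show b1 - b2 ∈ (B n : Set M)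
    rw [e]; exact (B n).sub_mem h2 h1


theorem cont_small [TopologicalSpace M]
    (hBbasis : (nhds (0 : M)).HasBasis (fun _ : ℕ => True) (fun n => (B n : Set M)))
    {r : AddMonoid.End M} (hrcont : Continuous r) (n : ℕ) :
    ∃ m : ℕ, ∀ x ∈ B m, r x ∈ B n := by
  have h0 : Filter.Tendsto r (nhds 0) (nhds 0) := by
    have h := hrcont.tendsto (0 : M)
    rwa [map_zero] at h
  obtain ⟨m, -, hm⟩ := (hBbasis.tendsto_iff hBbasis).1 h0 n trivial
  exact ⟨m, hm⟩

theorem map_mem_red [TopologicalSpace M]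
    (hBbasis : (nhds (0 : M)).HasBasis (fun _ : ℕ => True) (fun n => (B n : Set M)))
    {r : AddMonoid.End M} (hrcomm : ∀ t ∈ TS T1, ∀ x : M, r (t x) = t (r x))
    (hrcont : Continuous r) {a : M} (ha : a ∈ Red T1 B) : r a ∈ Red T1 B := by
  refine mem_red_of (fun n => ?_) (fun n => ?_)
  · obtain ⟨m, hm⟩ := cont_small hBbasis hrcont n
    intro t1 ht1
    obtain ⟨t2, ht2, b, hb, hs⟩ := red_perE ha m t1 ht1
    refine ⟨t2, ht2, r b, irr_map hrcomm hb, fun s hs' => ?_⟩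
    show s (t2 (t1 (r a))) - r b ∈ (B n : Set M)
    have e1 : s (t2 (t1 (r a))) = r (s (t2 (t1 a))) := by
      rw [← hrcomm t1 ht1 a, ← hrcomm t2 ht2 (t1 a), ← hrcomm s hs' (t2 (t1 a))]
    rw [e1, ← map_sub]
    exact hm _ (hs s hs')
  · intro t1 ht1 t2 ht2 b1 hb1 b2 hb2 hs1 hs2
    obtain ⟨m, hm⟩ := cont_small hBbasis hrcont n
    obtain ⟨s1, hs1m, c1, hc1, hst1⟩ := red_perE ha m t1 ht1
    obtain ⟨s2, hs2m, c2, hc2, hst2⟩ := red_perE ha m t2 ht2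
    have e1 : s1 (t1 (r a)) = r (s1 (t1 a)) := by
      rw [← hrcomm t1 ht1 a, ← hrcomm s1 hs1m (t1 a)]
    have e2 : s2 (t2 (r a)) = r (s2 (t2 a)) := by
      rw [← hrcomm t2 ht2 a, ← hrcomm s2 hs2m (t2 a)]
    have k1 : s1 (t1 (r a)) - b1 ∈ B n :=
      stuck_mem (N := {x | x - b1 ∈ (B n : Set M)}) (stuck_apply hs1 hs1m)
    have k2 : s2 (t2 (r a)) - b2 ∈ B n :=
      stuck_mem (N := {x | x - b2 ∈ (B n : Set M)}) (stuck_apply hs2 hs2m)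
    have k1' : s1 (t1 (r a)) - r c1 ∈ B n := by
      rw [e1, ← map_sub]
      exact hm _ (stuck_mem (N := {x | x - c1 ∈ (B m : Set M)}) hst1)
    have k2' : s2 (t2 (r a)) - r c2 ∈ B n := by
      rw [e2, ← map_sub]
      exact hm _ (stuck_mem (N := {x | x - c2 ∈ (B m : Set M)}) hst2)
    have hc : c1 - c2 ∈ B m := red_uniqE ha m (s1 * t1) (mul_mem_TS hs1m ht1)
      (s2 * t2) (mul_mem_TS hs2m ht2) c1 hc1 c2 hc2 hst1 hst2
    have hrc : r c1 - r c2 ∈ B n := by rw [← map_sub]; exact hm _ hc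
    have e : b1 - b2 = (s1 (t1 (r a)) - r c1) - (s1 (t1 (r a)) - b1)
        - ((s2 (t2 (r a)) - r c2) - (s2 (t2 (r a)) - b2)) + (r c1 - r c2) := by abel
    show b1 - b2 ∈ (B n : Set M)
    rw [e]
    exact (B n).add_mem ((B n).sub_mem ((B n).sub_mem k1' k1) ((B n).sub_mem k2' k2)) hrc

theorem nf_shift {a : M} (ha : a ∈ Red T1 B) {b : M} (hnf : NF B T1 a b)
    {t1 : AddMonoid.End M} (ht1 : t1 ∈ TS T1) (n : ℕ) :
    ∃ t2 ∈ TS T1, Stuck T1 {x | x - b ∈ (B n : Set M)} (t2 (t1 a)) := by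
  obtain ⟨t2, ht2, c, hcI, hsc⟩ := red_perE ha n t1 ht1
  obtain ⟨t3, ht3, hs3⟩ := hnf.2 n
  have hcb : c - b ∈ B n := red_uniqE ha n (t2 * t1) (mul_mem_TS ht2 ht1) t3 ht3
    c hcI b hnf.1 hsc hs3
  exact ⟨t2, ht2, stuck_coset_congr hcb hsc⟩

theorem eq_of_sep (hBsep : ⋂ n, (B n : Set M) = {0}) {x y : M}
    (h : ∀ n, x - y ∈ B n) : x = y := by
  have hx : x - y ∈ ⋂ n, (B n : Set M) := Set.mem_iInter.2 fun n => h n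
  rw [hBsep] at hx
  exact sub_eq_zero.1 hx

end RedAux


theorem Red_module_and_normal_form_map
    {M : Type*} [AddCommGroup M] [UniformSpace M] [IsUniformAddGroup M]
    [CompleteSpace M] [T2Space M]
    (B : ℕ → AddSubgroup M)
    (hBopen : ∀ n, IsOpen (B n : Set M))
    (hBanti : ∀ n, (B (n + 1) : Set M) ⊆ (B n : Set M))
    (hBbasis : (nhds (0 : M)).HasBasis (fun _ : ℕ => True) (fun n => (B n : Set M)))
    (hBsep : ⋂ n, (B n : Set M) = {0})
    (R : Set (AddMonoid.End M))
    (hRcont : ∀ r ∈ R, Continuous r)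
    (hRsmall : ∀ r ∈ R, ∀ n : ℕ, ∀ a ∈ B n, r a ∈ B n)
    (T1 : Set (AddMonoid.End M))
    (hT1cont : ∀ t ∈ T1, Continuous t)
    (hT1comm : ∀ t ∈ T1, ∀ r ∈ R, ∀ a : M, t (r a) = r (t a)) :
    (∃ H : AddSubgroup M, (H : Set M) = Red T1 B) ∧
    (∀ r ∈ R, ∀ a ∈ Red T1 B, r a ∈ Red T1 B) ∧
    (∀ t ∈ TS T1, ∀ a ∈ Red T1 B, t a ∈ Red T1 B) ∧
    (∀ a ∈ Red T1 B, ∃! b : M, b ∈ IrrS T1 ∧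
        ∀ n : ℕ, ∃ t ∈ TS T1, Stuck T1 {x | x - b ∈ (B n : Set M)} (t a)) ∧
    (∀ tS : M → M,
      (∀ a ∈ Red T1 B, tS a ∈ IrrS T1 ∧
        ∀ n : ℕ, ∃ t ∈ TS T1, Stuck T1 {x | x - tS a ∈ (B n : Set M)} (t a)) →
      (∀ a ∈ Red T1 B, ∀ b ∈ Red T1 B, tS (a + b) = tS a + tS b) ∧
      (IrrS T1 ⊆ Red T1 B) ∧
      (∀ b ∈ IrrS T1, tS b = b) ∧
      (∀ a ∈ Red T1 B, ∀ t ∈ TS T1, tS (t a) = tS a) ∧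
      (∀ a ∈ Red T1 B, tS a = 0 → a ∈ IS T1) ∧
      (∀ r : AddMonoid.End M, Continuous r →
        (∀ t ∈ TS T1, ∀ x : M, r (t x) = t (r x)) →
        (∀ a ∈ Red T1 B, r a ∈ Red T1 B) ∧
        (∀ a ∈ Red T1 B, tS (r a) = r (tS a)))) := by
  have hcommR : ∀ r ∈ R, ∀ t ∈ TS T1, ∀ x : M, r (t x) = t (r x) := by
    intro r hr t ht x
    exact RedAux.TS_comm (fun t' ht' x' => (hT1comm t' ht' r hr x').symm) ht x
  refine ⟨?_, ?_, ?_, ?_, ?_⟩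
  · refine ⟨{ carrier := Red T1 B
              zero_mem' := RedAux.zero_mem_red
              add_mem' := fun h h' => RedAux.add_mem_red h h'
              neg_mem' := fun h => RedAux.neg_mem_red h }, rfl⟩
  · intro r hr a ha
    exact RedAux.map_mem_red hBbasis (hcommR r hr) (hRcont r hr) ha
  · intro t ht a ha
    exact RedAux.ts_mem_red ht ha
  · intro a ha
    obtain ⟨b, hb⟩ := RedAux.NF_exists hBopen hBanti hBbasis hT1cont ha
    exact ⟨b, hb, fun b' hb' => RedAux.NF_unique hBsep (RedAux.red_uniqE ha) hb' hb⟩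
  · intro tS htS
    have hNF : ∀ a ∈ Red T1 B, RedAux.NF B T1 a (tS a) := fun a ha => htS a ha
    have huniq : ∀ a ∈ Red T1 B, ∀ b : M, RedAux.NF B T1 a b → tS a = b := fun a ha b hb =>
      RedAux.NF_unique hBsep (RedAux.red_uniqE ha) (hNF a ha) hb
    refine ⟨?_, ?_, ?_, ?_, ?_, ?_⟩
    · intro a ha a' ha'
      have hsum := RedAux.add_mem_red ha ha'
      refine huniq _ hsum _ ⟨RedAux.irr_add (hNF a ha).1 (hNF a' ha').1, fun n => ?_⟩
      obtain ⟨t1, ht1, hstk1⟩ := (hNF a ha).2 n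
      obtain ⟨t2, ht2, hstk2⟩ := RedAux.nf_shift ha' (hNF a' ha') ht1 n
      refine ⟨t2 * t1, RedAux.mul_mem_TS ht2 ht1, ?_⟩
      have hsum2 := RedAux.stuck_coset_add (RedAux.stuck_apply hstk1 ht2) hstk2
      have e : (t2 * t1) (a + a') = t2 (t1 a) + t2 (t1 a') := by
        show t2 (t1 (a + a')) = _
        rw [map_add, map_add]
      rw [e]
      exact hsum2
    · exact fun b hb => RedAux.irr_mem_red hb
    · intro b hb
      refine huniq b (RedAux.irr_mem_red hb) b
        ⟨hb, fun n => ⟨1, RedAux.one_mem_TS T1, fun s hs => ?_⟩⟩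
      show s ((1 : AddMonoid.End M) b) - b ∈ (B n : Set M)
      have e : (1 : AddMonoid.End M) b = b := rfl
      rw [e, hb s hs, sub_self]
      exact (B n).zero_mem
    · intro a ha t ht
      have hta := RedAux.ts_mem_red ht ha
      refine RedAux.eq_of_sep hBsep fun n => ?_
      obtain ⟨t2, ht2, hk2⟩ := (hNF _ hta).2 n
      obtain ⟨t1, ht1, hk1⟩ := (hNF a ha).2 n
      exact RedAux.red_uniqE ha n (t2 * t) (RedAux.mul_mem_TS ht2 ht) t1 ht1
        (tS (t a)) (hNF _ hta).1 (tS a) (hNF a ha).1 hk2 hk1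
    · intro a ha h0
      choose t ht hstk using (hNF a ha).2
      have hmem : ∀ n, t n a ∈ B n := by
        intro n
        have h : t n a - tS a ∈ (B n : Set M) :=
          RedAux.stuck_mem (N := {x | x - tS a ∈ (B n : Set M)}) (hstk n)
        rw [h0, sub_zero] at h
        exact h
      have htend : Filter.Tendsto (fun n => t n a) Filter.atTop (nhds 0) := by
        rw [hBbasis.tendsto_right_iff]
        intro m _
        filter_upwards [Filter.eventually_ge_atTop m] with k hk
        exact RedAux.B_anti hBanti hk (hmem k)
      have htend2 : Filter.Tendsto (fun n => a - t n a) Filter.atTop (nhds a) := by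
        have h := Filter.Tendsto.const_sub a htend
        simpa using h
      exact mem_closure_of_tendsto htend2 (Filter.Eventually.of_forall fun n =>
        AddSubgroup.subset_closure ⟨a, t n, ht n, rfl⟩)
    · intro r hrcont hrcomm'
      have hmap : ∀ a ∈ Red T1 B, r a ∈ Red T1 B := fun a ha =>
        RedAux.map_mem_red hBbasis hrcomm' hrcont ha
      refine ⟨hmap, ?_⟩
      intro a ha
      refine huniq _ (hmap a ha) _ ⟨RedAux.irr_map hrcomm' (hNF a ha).1, fun n => ?_⟩
      obtain ⟨m, hm⟩ := RedAux.cont_small hBbasis hrcont n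
      obtain ⟨t1, ht1, hstk⟩ := (hNF a ha).2 m
      refine ⟨t1, ht1, fun s hs => ?_⟩
      show s (t1 (r a)) - r (tS a) ∈ (B n : Set M)
      have e : s (t1 (r a)) = r (s (t1 a)) := by
        rw [← hrcomm' t1 ht1 a, ← hrcomm' s hs (t1 a)]
      rw [e, ← map_sub]
      exact hm _ (hstk s hs)
end

section
/- If T(S) is equicontinuous, then the map t^S : Red(S) → Irr(S) is continuous, and the sets Per(S), Red(S) and, for every ε ∈ Ô, the sets Per_ε(S) and Red_ε(S) are topologically closed in M̄. -/
open Set Filter Topology Pointwise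

theorem equicontinuous_closedness
    {M : Type*} [AddCommGroup M] [UniformSpace M] [IsUniformAddGroup M]
    [CompleteSpace M] [T2Space M]
    (B : ℕ → AddSubgroup M)
    (hBopen : ∀ n, IsOpen (B n : Set M))
    (hBanti : ∀ n, (B (n + 1) : Set M) ⊆ (B n : Set M))
    (hBbasis : (nhds (0 : M)).HasBasis (fun _ : ℕ => True) (fun n => (B n : Set M)))
    (hBsep : ⋂ n, (B n : Set M) = {0})
    (R : Set (AddMonoid.End M))
    (hRcont : ∀ r ∈ R, Continuous r)
    (hRsmall : ∀ r ∈ R, ∀ n : ℕ, ∀ a ∈ B n, r a ∈ B n)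
    (T1 : Set (AddMonoid.End M))
    (hT1cont : ∀ t ∈ T1, Continuous t)
    (hT1comm : ∀ t ∈ T1, ∀ r ∈ R, ∀ a : M, t (r a) = r (t a))
    (hequi : Equicont T1 B) :
    (∀ tS : M → M,
      (∀ a ∈ Red T1 B, tS a ∈ IrrS T1 ∧
        ∀ n : ℕ, ∃ t ∈ TS T1, Stuck T1 {x | x - tS a ∈ (B n : Set M)} (t a)) →
      ContinuousOn tS (Red T1 B)) ∧
    IsClosed (Per T1 B) ∧
    IsClosed (Red T1 B) ∧
    (∀ n : ℕ, IsClosed (PerE T1 (B n))) ∧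
    (∀ n : ℕ, IsClosed (RedE T1 B (B n))) := by
  -- neighbourhood helper
  have hnbhd : ∀ (a : M) (m : ℕ), {x : M | x - a ∈ (B m : Set M)} ∈ nhds a := by
    intro a m
    have hop : IsOpen {x : M | x - a ∈ (B m : Set M)} :=
      (hBopen m).preimage (continuous_id.sub continuous_const)
    exact hop.mem_nhds (by simp [AddSubgroup.zero_mem])
  -- transfer of stuckness between nearby points
  have stuck_transfer : ∀ n m : ℕ, (∀ t ∈ TS T1, ∀ a ∈ B m, t a ∈ B n) →
      ∀ a a' : M, a' - a ∈ B m → ∀ t0 ∈ TS T1, ∀ b : M,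
      Stuck T1 {x | x - b ∈ (B n : Set M)} (t0 a') →
      Stuck T1 {x | x - b ∈ (B n : Set M)} (t0 a) := by
    intro n m hm a a' hdiff t0 ht0 b hst t ht
    have h1 : t (t0 a') - b ∈ B n := hst t ht
    have h2 : (t * t0) (a' - a) ∈ B n :=
      hm _ (Submonoid.mul_mem _ ht ht0) _ hdiff
    have h3 : t (t0 a) - b = (t (t0 a') - b) - (t * t0) (a' - a) := by
      show t (t0 a) - b = (t (t0 a') - b) - t (t0 (a' - a))
      simp only [map_sub]; abel
    show t (t0 a) - b ∈ (B n : Set M)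
    rw [h3]; exact sub_mem h1 h2
  -- PerE is closed
  have hPerE : ∀ n : ℕ, IsClosed (PerE T1 (B n)) := by
    intro n
    obtain ⟨m, hm⟩ := hequi n
    refine isClosed_of_closure_subset ?_
    intro a ha
    obtain ⟨a', ha'm, ha'Per⟩ := (mem_closure_iff_nhds.mp ha) _ (hnbhd a m)
    intro t1 ht1
    obtain ⟨t2, ht2, b, hb, hst⟩ := ha'Per t1 ht1
    refine ⟨t2, ht2, b, hb, ?_⟩
    exact stuck_transfer n m hm a a' ha'm (t2 * t1)
      (Submonoid.mul_mem _ ht2 ht1) b hst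
  have hPer : IsClosed (Per T1 B) := isClosed_iInter hPerE
  -- RedE is closed
  have hRedE : ∀ n : ℕ, IsClosed (RedE T1 B (B n)) := by
    intro n
    obtain ⟨m, hm⟩ := hequi n
    refine isClosed_of_closure_subset ?_
    intro a ha
    have haPer : a ∈ Per T1 B :=
      hPer.closure_subset_iff.mpr (fun x hx => hx.1) ha
    refine ⟨haPer, ?_⟩
    intro t1 ht1 t2 ht2 b1 hb1 b2 hb2 hs1 hs2
    obtain ⟨a', ha'm, ha'Red⟩ := (mem_closure_iff_nhds.mp ha) _ (hnbhd a m)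
    have hdiff : a - a' ∈ B m := by
      have := (B m).neg_mem ha'm
      rwa [neg_sub] at this
    have hs1' : Stuck T1 {x | x - b1 ∈ (B n : Set M)} (t1 a') :=
      stuck_transfer n m hm a' a hdiff t1 ht1 b1 hs1
    have hs2' : Stuck T1 {x | x - b2 ∈ (B n : Set M)} (t2 a') :=
      stuck_transfer n m hm a' a hdiff t2 ht2 b2 hs2
    exact ha'Red.2 t1 ht1 t2 ht2 b1 hb1 b2 hb2 hs1' hs2'
  have hRed : IsClosed (Red T1 B) := isClosed_iInter hRedE
  refine ⟨?_, hPer, hRed, hPerE, hRedE⟩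
  -- continuity of tS
  intro tS htS a haRed
  have haRed' : ∀ k : ℕ, a ∈ RedE T1 B (B k) := fun k => mem_iInter.mp haRed k
  rw [ContinuousWithinAt, ← tendsto_sub_nhds_zero_iff]
  rw [hBbasis.tendsto_right_iff]
  intro n _
  obtain ⟨m, hm⟩ := hequi n
  filter_upwards [mem_nhdsWithin_of_mem_nhds (hnbhd a m), self_mem_nhdsWithin]
    with x hxm hxRed
  -- hxm : x - a ∈ B m, hxRed : x ∈ Red T1 B
  obtain ⟨hIrra, hsta⟩ := htS a haRed
  obtain ⟨hIrrx, hstx⟩ := htS x hxRed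
  obtain ⟨t, ht, hstuck⟩ := hsta n
  obtain ⟨t', ht', hstuck'⟩ := hstx n
  -- transfer: t' a is stuck in tS x + B n
  have hstuck'' : Stuck T1 {y | y - tS x ∈ (B n : Set M)} (t' a) :=
    stuck_transfer n m hm a x hxm t' ht' (tS x) hstuck'
  have huniq : a ∈ UniqE T1 (B n : Set M) := (haRed' n).2
  have hsub : tS a - tS x ∈ B n :=
    huniq t ht t' ht' (tS a) hIrra (tS x) hIrrx hstuck hstuck''
  have : tS x - tS a ∈ B n := by
    have := (B n).neg_mem hsub
    rwa [neg_sub] at this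
  exact this
end

section
/- Let T1(S') ⊆ T1(S), and define T(S'), Irr(S'), Per(S'), Red(S') and t^{S'} from T1(S') exactly as the corresponding objects T(S), Irr(S), Per(S), Red(S) and t^S are defined from T1(S). If Irr(S') = Irr(S), Per(S') = M̄, Red(S) = M̄ and T(S) is equicontinuous, then Red(S') = M̄ as well and t^{S'} = t^S. -/
open Set Filter Topology Pointwise

theorem dropping_redundant_reductions
    {M : Type*} [AddCommGroup M] [UniformSpace M] [IsUniformAddGroup M]
    [CompleteSpace M] [T2Space M]
    (B : ℕ → AddSubgroup M)
    (hBopen : ∀ n, IsOpen (B n : Set M))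
    (hBanti : ∀ n, (B (n + 1) : Set M) ⊆ (B n : Set M))
    (hBbasis : (nhds (0 : M)).HasBasis (fun _ : ℕ => True) (fun n => (B n : Set M)))
    (hBsep : ⋂ n, (B n : Set M) = {0})
    (R : Set (AddMonoid.End M))
    (hRcont : ∀ r ∈ R, Continuous r)
    (hRsmall : ∀ r ∈ R, ∀ n : ℕ, ∀ a ∈ B n, r a ∈ B n)
    (T1 T1' : Set (AddMonoid.End M))
    (hT1cont : ∀ t ∈ T1, Continuous t)
    (hT1comm : ∀ t ∈ T1, ∀ r ∈ R, ∀ a : M, t (r a) = r (t a))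
    (hsub : T1' ⊆ T1)
    (hIrr : IrrS T1' = IrrS T1)
    (hPer' : Per T1' B = Set.univ)
    (hRed : Red T1 B = Set.univ)
    (hequi : Equicont T1 B) :
    Red T1' B = Set.univ ∧
    ∀ tS tS' : M → M,
      (∀ a : M, tS a ∈ IrrS T1 ∧
        ∀ n : ℕ, ∃ t ∈ TS T1, Stuck T1 {x | x - tS a ∈ (B n : Set M)} (t a)) →
      (∀ a : M, tS' a ∈ IrrS T1' ∧
        ∀ n : ℕ, ∃ t ∈ TS T1', Stuck T1' {x | x - tS' a ∈ (B n : Set M)} (t a)) →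
      tS' = tS := by
  classical
  -- basic facts
  have hanti : ∀ k l : ℕ, k ≤ l → (B l : Set M) ⊆ (B k : Set M) := by
    intro k l h
    induction l, h using Nat.le_induction with
    | base => exact subset_rfl
    | succ n hn ih => exact (hBanti n).trans ih
  have hTSsub : TS T1' ⊆ TS T1 := Submonoid.closure_mono hsub
  have hone : ∀ T : Set (AddMonoid.End M), (1 : AddMonoid.End M) ∈ TS T :=
    fun T => (Submonoid.closure T).one_mem
  have hmul : ∀ T : Set (AddMonoid.End M), ∀ s t : AddMonoid.End M,
      s ∈ TS T → t ∈ TS T → s * t ∈ TS T :=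
    fun T s t hs ht => (Submonoid.closure T).mul_mem hs ht
  have haRed : ∀ a : M, ∀ n : ℕ, a ∈ Per T1 B ∧ a ∈ UniqE T1 (B n) := by
    intro a n
    have ha : a ∈ Red T1 B := hRed ▸ Set.mem_univ a
    exact Set.mem_iInter.1 ha n
  have haPer : ∀ a : M, ∀ n : ℕ, ∀ t1 ∈ TS T1, ∃ t2 ∈ TS T1, ∃ b ∈ IrrS T1,
      Stuck T1 {x | x - b ∈ (B n : Set M)} (t2 (t1 a)) := by
    intro a n
    exact Set.mem_iInter.1 (haRed a 0).1 n
  have haPer' : ∀ a : M, ∀ n : ℕ, ∀ t1 ∈ TS T1', ∃ t2 ∈ TS T1', ∃ b ∈ IrrS T1',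
      Stuck T1' {x | x - b ∈ (B n : Set M)} (t2 (t1 a)) := by
    intro a n
    have ha : a ∈ Per T1' B := hPer' ▸ Set.mem_univ a
    exact Set.mem_iInter.1 ha n
  have hE : ∀ n : ℕ, ∃ m : ℕ, (B m : Set M) ⊆ (B n : Set M) ∧
      ∀ t ∈ TS T1, ∀ x ∈ B m, t x ∈ B n := by
    intro n
    obtain ⟨m, hm⟩ := hequi n
    exact ⟨max m n, hanti n _ (le_max_right m n),
      fun t ht x hx => hm t ht x (hanti m _ (le_max_left m n) hx)⟩
  -- the key comparison lemma
  have key : ∀ a : M, ∀ n m : ℕ, (B m : Set M) ⊆ (B n : Set M) →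
      (∀ t ∈ TS T1, ∀ x ∈ B m, t x ∈ B n) →
      ∀ t' ∈ TS T1, ∀ b' ∈ IrrS T1, t' a - b' ∈ B m →
      ∀ t ∈ TS T1, ∀ b ∈ IrrS T1, Stuck T1 {x | x - b ∈ (B n : Set M)} (t a) →
      b' - b ∈ B n := by
    intro a n m hmn hEm t' ht' b' hb' hclose t ht b hb hstuck
    obtain ⟨w, hw, d, hd, hst⟩ := haPer a n t' ht'
    have h1 : w (t' a) - d ∈ B n := by
      have h := hst 1 (hone T1)
      simpa using h
    have h2 : w (t' a) - b' ∈ B n := by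
      have hb'w : w b' = b' := hb' w hw
      have h := hEm w hw _ hclose
      rw [map_sub, hb'w] at h
      exact h
    have h3 : b' - d ∈ B n := by
      have h := sub_mem h1 h2
      have e : w (t' a) - d - (w (t' a) - b') = b' - d := by abel
      rwa [e] at h
    have hstuck1 : Stuck T1 {x | x - d ∈ (B n : Set M)} ((w * t') a) := by
      intro s hs
      have := hst s hs
      simpa using this
    have h4 : d - b ∈ B n :=
      (haRed a n).2 (w * t') (hmul T1 w t' hw ht') t ht d hd b hb hstuck1 hstuck
    have e : b' - d + (d - b) = b' - b := by abel
    have := add_mem h3 h4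
    rwa [e] at this
  -- Red T1' B = univ
  have hRed' : Red T1' B = Set.univ := by
    refine Set.eq_univ_of_forall fun a => ?_
    refine Set.mem_iInter.2 fun n => ⟨hPer' ▸ Set.mem_univ a, ?_⟩
    intro t1 ht1 t2 ht2 b1 hb1 b2 hb2 hs1 hs2
    obtain ⟨m, hmn, hEm⟩ := hE n
    obtain ⟨u, hu, c1, hc1, hsc1⟩ := haPer' a m t1 ht1
    obtain ⟨v, hv, c2, hc2, hsc2⟩ := haPer' a m t2 ht2
    have h11 : u (t1 a) - b1 ∈ B n := hs1 u hu
    have h12 : u (t1 a) - c1 ∈ B m := by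
      have h := hsc1 1 (hone T1')
      simpa using h
    have hb1c1 : b1 - c1 ∈ B n := by
      have h := sub_mem h11 (hmn h12)
      have e : u (t1 a) - b1 - (u (t1 a) - c1) = c1 - b1 := by abel
      rw [e] at h
      have := neg_mem h
      simpa using this
    have h21 : v (t2 a) - b2 ∈ B n := hs2 v hv
    have h22 : v (t2 a) - c2 ∈ B m := by
      have h := hsc2 1 (hone T1')
      simpa using h
    have hb2c2 : b2 - c2 ∈ B n := by
      have h := sub_mem h21 (hmn h22)
      have e : v (t2 a) - b2 - (v (t2 a) - c2) = c2 - b2 := by abel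
      rw [e] at h
      have := neg_mem h
      simpa using this
    -- reference T1-stuck value
    obtain ⟨w0, hw0, e0, he0, hse0⟩ := haPer a n 1 (hone T1)
    have hse0' : Stuck T1 {x | x - e0 ∈ (B n : Set M)} (w0 a) := by
      intro s hs
      have := hse0 s hs
      simpa using this
    have hc1' : c1 ∈ IrrS T1 := hIrr ▸ hc1
    have hc2' : c2 ∈ IrrS T1 := hIrr ▸ hc2
    have hclose1 : (u * t1) a - c1 ∈ B m := by simpa using h12
    have hclose2 : (v * t2) a - c2 ∈ B m := by simpa using h22
    have hc1e : c1 - e0 ∈ B n :=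
      key a n m hmn hEm (u * t1) (hTSsub (hmul T1' u t1 hu ht1)) c1 hc1' hclose1
        w0 hw0 e0 he0 hse0'
    have hc2e : c2 - e0 ∈ B n :=
      key a n m hmn hEm (v * t2) (hTSsub (hmul T1' v t2 hv ht2)) c2 hc2' hclose2
        w0 hw0 e0 he0 hse0'
    have h := add_mem (add_mem hb1c1 (sub_mem hc1e hc2e)) (neg_mem hb2c2)
    have e : b1 - c1 + (c1 - e0 - (c2 - e0)) + -(b2 - c2) = b1 - b2 := by abel
    rwa [e] at h
  refine ⟨hRed', ?_⟩
  intro tS tS' hA hA'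
  funext a
  have hb : tS a ∈ IrrS T1 := (hA a).1
  have hb' : tS' a ∈ IrrS T1 := hIrr ▸ (hA' a).1
  have hzero : tS' a - tS a ∈ ⋂ n, (B n : Set M) := by
    refine Set.mem_iInter.2 fun n => ?_
    obtain ⟨m, hmn, hEm⟩ := hE n
    obtain ⟨t, ht, hst⟩ := (hA a).2 n
    obtain ⟨t', ht', hst'⟩ := (hA' a).2 m
    have hclose : t' a - tS' a ∈ B m := hst' 1 (hone T1')
    exact key a n m hmn hEm t' (hTSsub ht') _ hb' hclose t ht _ hb hst
  rw [hBsep] at hzero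
  have : tS' a - tS a = 0 := hzero
  exact sub_eq_zero.1 this
end

section
/- Induction principle over Y: Let P be a partial order on Y that satisfies the topological descending chain condition. If Z ⊆ Y is such that (i) there exists ε ∈ Ô with ε ∩ Y ⊆ Z, and (ii) for every μ ∈ Y, if every ν ∈ Y with ν < μ in P belongs to Z then μ ∈ Z, then Z = Y. -/
open Set Filter Topology

theorem induction_over_Y
    {M : Type*} [AddCommGroup M] [TopologicalSpace M] [IsTopologicalAddGroup M]
    [T2Space M]
    (B : ℕ → AddSubgroup M)
    (hBopen : ∀ n, IsOpen (B n : Set M))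
    (hBanti : ∀ n, (B (n + 1) : Set M) ⊆ (B n : Set M))
    (hBbasis : (nhds (0 : M)).HasBasis (fun _ : ℕ => True) (fun n => (B n : Set M)))
    (hBsep : ⋂ n, (B n : Set M) = {0})
    (Y : Set M)
    (P : M → M → Prop)
    (hPirr : ∀ μ, ¬ P μ μ)
    (hPtrans : ∀ μ ν ρ, P μ ν → P ν ρ → P μ ρ)
    (hTDCC : TDCC Y P)
    (Z : Set M) (hZY : Z ⊆ Y)
    (hbase : ∃ n : ℕ, (B n : Set M) ∩ Y ⊆ Z)
    (hstep : ∀ μ ∈ Y, (∀ ν ∈ Y, P ν μ → ν ∈ Z) → μ ∈ Z) :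
    Z = Y := by
  refine Set.Subset.antisymm hZY ?_
  by_contra h
  obtain ⟨μ0, hμ0Y, hμ0Z⟩ : ∃ μ, μ ∈ Y ∧ μ ∉ Z := by
    by_contra h'
    push_neg at h'
    exact h fun x hx => h' x hx
  have key : ∀ x : {x : M // x ∈ Y ∧ x ∉ Z},
      ∃ y : {x : M // x ∈ Y ∧ x ∉ Z}, P (y : M) (x : M) := by
    rintro ⟨x, hxY, hxZ⟩
    by_contra h'
    push_neg at h'
    exact hxZ (hstep x hxY fun ν hνY hνP => by
      by_contra hνZ
      exact h' ⟨ν, hνY, hνZ⟩ hνP)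
  choose g hg using key
  set seq : ℕ → {x : M // x ∈ Y ∧ x ∉ Z} := fun n => g^[n] ⟨μ0, hμ0Y, hμ0Z⟩ with hseq
  have hstepseq : ∀ n, P ((seq (n + 1) : M)) ((seq n : M)) := by
    intro n
    have : seq (n + 1) = g (seq n) := Function.iterate_succ_apply' g n _
    rw [this]
    exact hg _
  have htend := hTDCC (fun n => (seq n : M)) (fun n => (seq n).2.1) hstepseq
  obtain ⟨n, hn⟩ := hbase
  have : ∀ᶠ k in atTop, ((seq k : M)) ∈ (B n : Set M) :=
    htend (hBbasis.mem_of_mem (i := n) trivial)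
  obtain ⟨k, hk⟩ := this.exists
  exact (seq k).2.2 (hn ⟨hk, (seq k).2.1⟩)
end

section
/- The set I(S) is a topologically closed additive subgroup of M̄ with r(I(S)) ⊆ I(S) for every r ∈ R. More generally, every advanceable continuous additive group endomorphism of M̄ maps I(S) into itself. Every reduction t ∈ T(S) maps I(S) into itself, and in particular ker t ⊆ I(S) for every t ∈ T(S). Furthermore, I(S) equals the topological closure of the additive subgroup of M̄ generated by {a − t(a) : a ∈ M̄, t ∈ T1(S)}, and I(S) = Cspan({μ − t(μ) : μ ∈ Y, t ∈ T1(S)}). -/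
open Set Filter Topology Pointwise

/-- `R*Y`: images of elements of `Y` under finite compositions of elements of `R`. -/
def RstarY {M : Type*} [AddCommGroup M] (R : Set (AddMonoid.End M)) (Y : Set M) : Set M :=
  {b | ∃ r ∈ (Submonoid.closure R : Submonoid (AddMonoid.End M)), ∃ μ ∈ Y, b = r μ}

/-- A map is advanceable with respect to `T1` if it can be advanced past simple
reductions on elements of `R*Y`. -/
def Advanceable {M : Type*} [AddCommGroup M] (R : Set (AddMonoid.End M)) (Y : Set M)
    (T1 : Set (AddMonoid.End M)) (v : AddMonoid.End M) : Prop :=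
  ∀ t ∈ T1, ∀ b ∈ RstarY R Y, ∃ u ∈ TS T1, u (v b) = v (t b)

section AuxIS
variable {M : Type*} [AddCommGroup M] [TopologicalSpace M] [IsTopologicalAddGroup M]

omit [TopologicalSpace M] [IsTopologicalAddGroup M] in
lemma aux_comm {R : Set (AddMonoid.End M)} {t : AddMonoid.End M}
    (h : ∀ r ∈ R, ∀ a : M, t (r a) = r (t a)) {r : AddMonoid.End M}
    (hr : r ∈ Submonoid.closure R) : ∀ a : M, t (r a) = r (t a) := by
  induction hr using Submonoid.closure_induction with
  | mem x hx => exact h x hx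
  | one => intro a; rfl
  | mul x y hx hy ihx ihy => intro a; exact (ihx (y a)).trans (congrArg x (ihy a))

lemma cspan_subset {R : Set (AddMonoid.End M)} {Z N : Set M} (h1 : Z ⊆ N) (h2 : IsClosed N)
    (h3 : ∃ H : AddSubgroup M, N = ↑H) (h4 : ∀ r ∈ R, ∀ a ∈ N, r a ∈ N) :
    Cspan R Z ⊆ N :=
  Set.sInter_subset_of_mem ⟨h1, h2, h3, h4⟩

lemma subset_cspan {R : Set (AddMonoid.End M)} {Z : Set M} : Z ⊆ Cspan R Z := fun z hz =>
  Set.mem_sInter.mpr fun _ hN => hN.1 hz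

lemma cspan_isClosed {R : Set (AddMonoid.End M)} {Z : Set M} : IsClosed (Cspan R Z) :=
  isClosed_sInter fun _ hN => hN.2.1

lemma cspan_stable {R : Set (AddMonoid.End M)} {Z : Set M} {r : AddMonoid.End M} (hr : r ∈ R)
    {a : M} (ha : a ∈ Cspan R Z) : r a ∈ Cspan R Z :=
  Set.mem_sInter.mpr fun N hN => hN.2.2.2 r hr a (Set.mem_sInter.mp ha N hN)

lemma cspan_subgroup (R : Set (AddMonoid.End M)) (Z : Set M) :
    ∃ H : AddSubgroup M, Cspan R Z = ↑H := by
  have hzero : (0 : M) ∈ Cspan R Z := Set.mem_sInter.mpr fun N hN => by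
    obtain ⟨-, -, ⟨H, rfl⟩, -⟩ := hN; exact H.zero_mem
  have hadd : ∀ x y : M, x ∈ Cspan R Z → y ∈ Cspan R Z → x + y ∈ Cspan R Z := by
    intro x y hx hy
    refine Set.mem_sInter.mpr fun N hN => ?_
    have hx' := Set.mem_sInter.mp hx N hN
    have hy' := Set.mem_sInter.mp hy N hN
    obtain ⟨-, -, ⟨H, rfl⟩, -⟩ := hN
    exact H.add_mem hx' hy'
  have hneg : ∀ x : M, x ∈ Cspan R Z → -x ∈ Cspan R Z := by
    intro x hx
    refine Set.mem_sInter.mpr fun N hN => ?_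
    have hx' := Set.mem_sInter.mp hx N hN
    obtain ⟨-, -, ⟨H, rfl⟩, -⟩ := hN
    exact H.neg_mem hx'
  exact ⟨{ carrier := Cspan R Z
           zero_mem' := hzero
           add_mem' := fun hx hy => hadd _ _ hx hy
           neg_mem' := fun hx => hneg _ hx }, rfl⟩

/-- If a continuous endomorphism maps a generating set into the generated subgroup,
it maps the topological closure of that subgroup into itself. -/
lemma aux_map_closure {S : Set M} {r : AddMonoid.End M} (hrc : Continuous r)
    (h : ∀ x ∈ S, r x ∈ AddSubgroup.closure S) {a : M}
    (ha : a ∈ closure (AddSubgroup.closure S : Set M)) :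
    r a ∈ closure (AddSubgroup.closure S : Set M) := by
  have hsub : ∀ x ∈ AddSubgroup.closure S, r x ∈ AddSubgroup.closure S := by
    intro x hx
    induction hx using AddSubgroup.closure_induction with
    | mem y hy => exact h y hy
    | zero => simpa using (AddSubgroup.closure S).zero_mem
    | add x y hx hy ihx ihy => rw [map_add]; exact add_mem ihx ihy
    | neg x hx ihx => rw [map_neg]; exact neg_mem ihx
  have h1 : r a ∈ closure (r '' (AddSubgroup.closure S : Set M)) :=
    image_closure_subset_closure_image hrc ⟨a, ha, rfl⟩
  refine closure_mono ?_ h1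
  rintro _ ⟨x, hx, rfl⟩; exact hsub x hx

lemma aux_sub_mem {T1 : Set (AddMonoid.End M)} {t : AddMonoid.End M} (ht : t ∈ TS T1) :
    ∀ a : M, a - t a ∈ AddSubgroup.closure {x : M | ∃ a : M, ∃ t ∈ T1, x = a - t a} := by
  induction ht using Submonoid.closure_induction with
  | mem x hx => exact fun a => AddSubgroup.subset_closure ⟨a, x, hx, rfl⟩
  | one => intro a; simpa using (AddSubgroup.closure _).zero_mem
  | mul x y hx hy ihx ihy =>
      intro a
      have h : a - (x * y) a = (a - y a) + (y a - x (y a)) := by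
        show a - x (y a) = _; abel
      rw [h]
      exact add_mem (ihy a) (ihx (y a))

omit [IsTopologicalAddGroup M] in
lemma aux_ts_cont {T1 : Set (AddMonoid.End M)} (hT1cont : ∀ t ∈ T1, Continuous t)
    {t : AddMonoid.End M} (ht : t ∈ TS T1) : Continuous t := by
  induction ht using Submonoid.closure_induction with
  | mem x hx => exact hT1cont x hx
  | one => exact continuous_id
  | mul x y hx hy ihx ihy => exact ihx.comp ihy

omit [TopologicalSpace M] [IsTopologicalAddGroup M] in
lemma aux_ts_comm {T1 R : Set (AddMonoid.End M)}
    (hT1comm : ∀ t ∈ T1, ∀ r ∈ R, ∀ a : M, t (r a) = r (t a))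
    {r : AddMonoid.End M} (hr : r ∈ R) {t : AddMonoid.End M} (ht : t ∈ TS T1) :
    ∀ a : M, t (r a) = r (t a) := by
  induction ht using Submonoid.closure_induction with
  | mem x hx => exact hT1comm x hx r hr
  | one => intro a; rfl
  | mul x y hx hy ihx ihy => intro a; exact (congrArg x (ihy (a))).trans (ihx (y a))

end AuxIS


theorem IS_closure_properties
    {M : Type*} [AddCommGroup M] [UniformSpace M] [IsUniformAddGroup M]
    [CompleteSpace M] [T2Space M]
    (B : ℕ → AddSubgroup M)
    (hBopen : ∀ n, IsOpen (B n : Set M))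
    (hBanti : ∀ n, (B (n + 1) : Set M) ⊆ (B n : Set M))
    (hBbasis : (nhds (0 : M)).HasBasis (fun _ : ℕ => True) (fun n => (B n : Set M)))
    (hBsep : ⋂ n, (B n : Set M) = {0})
    (R : Set (AddMonoid.End M))
    (hRcont : ∀ r ∈ R, Continuous r)
    (hRsmall : ∀ r ∈ R, ∀ n : ℕ, ∀ a ∈ B n, r a ∈ B n)
    (T1 : Set (AddMonoid.End M))
    (hT1cont : ∀ t ∈ T1, Continuous t)
    (hT1comm : ∀ t ∈ T1, ∀ r ∈ R, ∀ a : M, t (r a) = r (t a))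
    (Y : Set M)
    (hYspan : Cspan R Y = (Set.univ : Set M)) :
    IsClosed (IS T1) ∧
    (∃ H : AddSubgroup M, (H : Set M) = IS T1) ∧
    (∀ r ∈ R, ∀ a ∈ IS T1, r a ∈ IS T1) ∧
    (∀ v : AddMonoid.End M, Continuous v → Advanceable R Y T1 v →
      ∀ a ∈ IS T1, v a ∈ IS T1) ∧
    (∀ t ∈ TS T1, ∀ a ∈ IS T1, t a ∈ IS T1) ∧
    (∀ t ∈ TS T1, ∀ a : M, t a = 0 → a ∈ IS T1) ∧
    IS T1 = closure (AddSubgroup.closure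
      {x : M | ∃ a : M, ∃ t ∈ T1, x = a - t a} : Set M) ∧
    IS T1 = Cspan R {x : M | ∃ μ ∈ Y, ∃ t ∈ T1, x = μ - t μ} := by
  have hIS : IS T1 = closure
      (AddSubgroup.closure {x : M | ∃ a : M, ∃ t ∈ TS T1, x = a - t a} : Set M) := rfl
  -- Part 7 : the subgroup generated by TS-differences equals that generated by T1-differences
  have hgeq : AddSubgroup.closure {x : M | ∃ a : M, ∃ t ∈ TS T1, x = a - t a}
      = AddSubgroup.closure {x : M | ∃ a : M, ∃ t ∈ T1, x = a - t a} := by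
    apply le_antisymm
    · rw [AddSubgroup.closure_le]
      rintro x ⟨a, t, ht, rfl⟩
      exact aux_sub_mem ht a
    · apply AddSubgroup.closure_mono
      rintro x ⟨a, t, ht, rfl⟩
      exact ⟨a, t, Submonoid.subset_closure ht, rfl⟩
  have part7 : IS T1 = closure
      (AddSubgroup.closure {x : M | ∃ a : M, ∃ t ∈ T1, x = a - t a} : Set M) := by
    rw [hIS, hgeq]
  have part1 : IsClosed (IS T1) := isClosed_closure
  have part2 : ∃ H : AddSubgroup M, (H : Set M) = IS T1 :=
    ⟨(AddSubgroup.closure {x : M | ∃ a : M, ∃ t ∈ TS T1, x = a - t a}).topologicalClosure,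
      AddSubgroup.topologicalClosure_coe⟩
  have part3 : ∀ r ∈ R, ∀ a ∈ IS T1, r a ∈ IS T1 := by
    intro r hr a ha
    refine aux_map_closure (hRcont r hr) ?_ ha
    rintro x ⟨b, t, ht, rfl⟩
    have hc : t (r b) = r (t b) := aux_ts_comm hT1comm hr ht b
    have hx : r (b - t b) = r b - t (r b) := by rw [map_sub, hc]
    rw [hx]
    exact AddSubgroup.subset_closure ⟨r b, t, ht, rfl⟩
  have part5 : ∀ t ∈ TS T1, ∀ a ∈ IS T1, t a ∈ IS T1 := by
    intro t ht a ha
    refine aux_map_closure (aux_ts_cont hT1cont ht) ?_ ha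
    rintro x ⟨b, u, hu, rfl⟩
    have h1 : t (b - u b) = (b - (t * u) b) - (b - t b) := by
      rw [map_sub]
      show t b - t (u b) = (b - t (u b)) - (b - t b)
      abel
    rw [h1]
    exact sub_mem (AddSubgroup.subset_closure ⟨b, t * u, mul_mem ht hu, rfl⟩)
      (AddSubgroup.subset_closure ⟨b, t, ht, rfl⟩)
  have part6 : ∀ t ∈ TS T1, ∀ a : M, t a = 0 → a ∈ IS T1 := by
    intro t ht a h0
    have h1 : a - t a ∈ AddSubgroup.closure {x : M | ∃ a : M, ∃ t ∈ TS T1, x = a - t a} :=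
      AddSubgroup.subset_closure ⟨a, t, ht, rfl⟩
    rw [h0, sub_zero] at h1
    exact _root_.subset_closure h1
  -- Part 8
  obtain ⟨Hc, hHc⟩ := cspan_subgroup R {x : M | ∃ μ ∈ Y, ∃ t ∈ T1, x = μ - t μ}
  have hgens_cspan : {x : M | ∃ a : M, ∃ t ∈ T1, x = a - t a}
      ⊆ Cspan R {x : M | ∃ μ ∈ Y, ∃ t ∈ T1, x = μ - t μ} := by
    rintro x ⟨a, t, ht, rfl⟩
    set C := Cspan R {x : M | ∃ μ ∈ Y, ∃ t ∈ T1, x = μ - t μ} with hC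
    let φ : M →+ M :=
      { toFun := fun m => m - t m
        map_zero' := by simp
        map_add' := fun m n => by
          show (m + n) - t (m + n) = (m - t m) + (n - t n)
          rw [map_add]; abel }
    have hN : Set.univ ⊆ φ ⁻¹' C := by
      rw [← hYspan]
      apply cspan_subset
      · intro μ hμ
        exact subset_cspan ⟨μ, hμ, t, ht, rfl⟩
      · exact (cspan_isClosed.preimage (continuous_id.sub (hT1cont t ht)))
      · refine ⟨AddSubgroup.comap φ Hc, ?_⟩
        rw [hHc]; rfl
      · intro r hr b hb
        have hb' : φ b ∈ C := hb
        have : φ (r b) = r (φ b) := by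
          show r b - t (r b) = r (b - t b)
          rw [map_sub, hT1comm t ht r hr]
        show φ (r b) ∈ C
        rw [this]
        exact cspan_stable hr hb'
    exact hN (Set.mem_univ a)
  have part8 : IS T1 = Cspan R {x : M | ∃ μ ∈ Y, ∃ t ∈ T1, x = μ - t μ} := by
    apply Set.Subset.antisymm
    · rw [part7, hHc]
      have hle : AddSubgroup.closure {x : M | ∃ a : M, ∃ t ∈ T1, x = a - t a} ≤ Hc := by
        rw [AddSubgroup.closure_le]
        intro x hx
        have := hgens_cspan hx
        rwa [hHc] at this
      calc closure (AddSubgroup.closure {x : M | ∃ a : M, ∃ t ∈ T1, x = a - t a} : Set M)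
          ⊆ closure (Hc : Set M) := closure_mono hle
        _ = (Hc : Set M) := by
            rw [IsClosed.closure_eq]; rw [← hHc]; exact cspan_isClosed
    · apply cspan_subset
      · rintro x ⟨μ, hμ, t, ht, rfl⟩
        exact _root_.subset_closure
          (AddSubgroup.subset_closure ⟨μ, t, Submonoid.subset_closure ht, rfl⟩)
      · exact part1
      · obtain ⟨H, hH⟩ := part2; exact ⟨H, hH.symm⟩
      · exact part3
  -- Part 4
  have part4 : ∀ v : AddMonoid.End M, Continuous v → Advanceable R Y T1 v →
      ∀ a ∈ IS T1, v a ∈ IS T1 := by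
    intro v hv hadv a ha
    set RZ : Set M := {x : M | ∃ r ∈ Submonoid.closure R,
      ∃ z ∈ {x : M | ∃ μ ∈ Y, ∃ t ∈ T1, x = μ - t μ}, x = r z} with hRZ
    have hsub2 : Cspan R {x : M | ∃ μ ∈ Y, ∃ t ∈ T1, x = μ - t μ}
        ⊆ closure (AddSubgroup.closure RZ : Set M) := by
      apply cspan_subset
      · intro z hz
        exact _root_.subset_closure
          (AddSubgroup.subset_closure ⟨1, one_mem _, z, hz, rfl⟩)
      · exact isClosed_closure
      · exact ⟨(AddSubgroup.closure RZ).topologicalClosure, AddSubgroup.topologicalClosure_coe⟩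
      · intro r hr b hb
        refine aux_map_closure (hRcont r hr) ?_ hb
        rintro x ⟨r', hr', z, hz, rfl⟩
        exact AddSubgroup.subset_closure
          ⟨r * r', mul_mem (Submonoid.subset_closure hr) hr', z, hz, rfl⟩
    rw [part8] at ha
    have ha2 := hsub2 ha
    have hvRZ : ∀ x ∈ RZ, v x ∈ AddSubgroup.closure
        {x : M | ∃ a : M, ∃ t ∈ TS T1, x = a - t a} := by
      rintro x ⟨r, hr, z, ⟨μ, hμ, t, ht, rfl⟩, rfl⟩
      have hcomm : t (r μ) = r (t μ) := aux_comm (hT1comm t ht) hr μ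
      obtain ⟨u, hu, huv⟩ := hadv t ht (r μ) ⟨r, hr, μ, hμ, rfl⟩
      have hx : v (r (μ - t μ)) = v (r μ) - u (v (r μ)) := by
        rw [map_sub, ← hcomm, map_sub, huv]
      rw [hx]
      exact AddSubgroup.subset_closure ⟨v (r μ), u, hu, rfl⟩
    have hvH : ∀ x ∈ AddSubgroup.closure RZ, v x ∈ AddSubgroup.closure
        {x : M | ∃ a : M, ∃ t ∈ TS T1, x = a - t a} := by
      intro x hx
      induction hx using AddSubgroup.closure_induction with
      | mem y hy => exact hvRZ y hy
      | zero => simpa using (AddSubgroup.closure _).zero_mem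
      | add x y hx hy ihx ihy => rw [map_add]; exact add_mem ihx ihy
      | neg x hx ihx => rw [map_neg]; exact neg_mem ihx
    have h1 : v a ∈ closure (v '' (AddSubgroup.closure RZ : Set M)) :=
      image_closure_subset_closure_image hv ⟨a, ha2, rfl⟩
    refine closure_mono ?_ h1
    rintro _ ⟨x, hx, rfl⟩
    exact hvH x hx
  exact ⟨part1, part2, part3, part4, part5, part6, part7, part8⟩
end

section
/- If an ambiguity (t₁',μ',t₂') of T1(S)(i') is resolvable, then every ambiguity (t₁,μ,t₂) of T1(S)(i) that is an absolute shadow of (t₁',μ',t₂') is resolvable as well. -/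
open Set Filter Topology

theorem absolute_shadow_of_resolvable_ambiguity
    {I : Type*} {M : I → Type*}
    [∀ i, AddCommGroup (M i)] [∀ i, UniformSpace (M i)] [∀ i, IsUniformAddGroup (M i)]
    [∀ i, CompleteSpace (M i)] [∀ i, T2Space (M i)]
    (B : ∀ i, ℕ → AddSubgroup (M i))
    (hBopen : ∀ i n, IsOpen (B i n : Set (M i)))
    (hBanti : ∀ i n, (B i (n + 1) : Set (M i)) ⊆ (B i n : Set (M i)))
    (hBbasis : ∀ i, (nhds (0 : M i)).HasBasis (fun _ : ℕ => True)
      (fun n => (B i n : Set (M i))))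
    (hBsep : ∀ i, ⋂ n, (B i n : Set (M i)) = {0})
    (R : ∀ i, Set (AddMonoid.End (M i)))
    (hRcont : ∀ i, ∀ r ∈ R i, Continuous r)
    (hRsmall : ∀ i, ∀ r ∈ R i, ∀ n : ℕ, ∀ a ∈ B i n, r a ∈ B i n)
    (T1 : ∀ i, Set (AddMonoid.End (M i)))
    (hT1cont : ∀ i, ∀ t ∈ T1 i, Continuous t)
    (hT1comm : ∀ i, ∀ t ∈ T1 i, ∀ r ∈ R i, ∀ a : M i, t (r a) = r (t a))
    (Y : ∀ i, Set (M i))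
    -- the resolvable ambiguity (t₁',μ',t₂') of T1(S)(i')
    (i i' : I)
    (t1' t2' : AddMonoid.End (M i')) (μ' : M i')
    (ht1' : t1' ∈ T1 i') (ht2' : t2' ∈ T1 i') (hμ'Y : μ' ∈ Y i')
    (hnt1' : t1' μ' ≠ μ') (hnt2' : t2' μ' ≠ μ')
    (hres' : ∀ n : ℕ, ∃ t3 ∈ TS (T1 i'), ∃ t4 ∈ TS (T1 i'),
      t3 (t1' μ') - t4 (t2' μ') ∈ B i' n)
    -- the ambiguity (t₁,μ,t₂) of T1(S)(i), an absolute shadow of the former via v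
    (t1 t2 : AddMonoid.End (M i)) (μ : M i)
    (ht1 : t1 ∈ T1 i) (ht2 : t2 ∈ T1 i) (hμY : μ ∈ Y i)
    (hnt1 : t1 μ ≠ μ) (hnt2 : t2 μ ≠ μ)
    (v : M i' →+ M i) (hvcont : Continuous v)
    (hvadv : ∀ t' ∈ TS (T1 i'), ∃ t ∈ TS (T1 i), ∀ a : M i', v (t' a) = t (v a))
    (hμ : μ = v μ') (ht1v : t1 μ = v (t1' μ')) (ht2v : t2 μ = v (t2' μ')) :
    ∀ n : ℕ, ∃ t3 ∈ TS (T1 i), ∃ t4 ∈ TS (T1 i),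
      t3 (t1 μ) - t4 (t2 μ) ∈ B i n := by
  intro n
  -- pull back the neighbourhood `B i n` along `v`
  have hnhd : (v ⁻¹' (B i n : Set (M i))) ∈ nhds (0 : M i') := by
    apply hvcont.continuousAt.preimage_mem_nhds
    simpa using (hBopen i n).mem_nhds (B i n).zero_mem
  obtain ⟨m, -, hm⟩ := (hBbasis i').mem_iff.mp hnhd
  obtain ⟨t3', ht3', t4', ht4', hmem⟩ := hres' m
  obtain ⟨t3, ht3, ht3v⟩ := hvadv t3' ht3'
  obtain ⟨t4, ht4, ht4v⟩ := hvadv t4' ht4'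
  refine ⟨t3, ht3, t4, ht4, ?_⟩
  have : v (t3' (t1' μ') - t4' (t2' μ')) ∈ (B i n : Set (M i)) := hm hmem
  rw [map_sub, ht3v, ht4v] at this
  rwa [ht1v, ht2v]
end
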